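/- arXiv:1611.04432 — 6 statements merged into one kernel-verified Lean document; each statement's English description precedes it below -/
import Mathlib

section
/- Let α ∈ (1/2, 1] and let (ε_n)_{n≥1} be an arbitrary sequence with ε_n ∈ {−1, +1}. Define a(y) = Σ_{n≥1} ε_n · e^n · n^{−α} · 1_{[e^n, ∞)}(y) for y > 1. Then ∫_1^∞ |a(y)| · y^{−2} dy = ∞. -/
open MeasureTheory Filter

/-- The step function `a(y) = Σ_{n≥1} ε_n · e^n · n^{-α} · 1_{[e^n, ∞)}(y)`
(indexed here by `n+1`, `n : ℕ`, so that the sum runs over `n ≥ 1`). -/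
noncomputable def stepA (α : ℝ) (ε : ℕ → ℝ) (y : ℝ) : ℝ :=
  ∑' n : ℕ, ε (n + 1) * Real.exp (n + 1) * ((n : ℝ) + 1) ^ (-α) *
    Set.indicator (Set.Ici (Real.exp (n + 1))) (fun _ => (1 : ℝ)) y

/-- The `n`-th term (without indicator). -/
noncomputable def termA (α : ℝ) (ε : ℕ → ℝ) (n : ℕ) : ℝ :=
  ε (n + 1) * Real.exp (n + 1) * ((n : ℝ) + 1) ^ (-α)

/-- Partial sum `S_M = Σ_{k<M} termA k`. -/
noncomputable def SA (α : ℝ) (ε : ℕ → ℝ) (M : ℕ) : ℝ :=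
  ∑ k ∈ Finset.range M, termA α ε k

lemma stepA_eq (α : ℝ) (ε : ℕ → ℝ) (M : ℕ) (y : ℝ)
    (h1 : Real.exp ((M : ℝ) + 1) ≤ y) (h2 : y < Real.exp ((M : ℝ) + 2)) :
    stepA α ε y = SA α ε (M + 1) := by
  unfold stepA SA termA
  rw [tsum_eq_sum (s := Finset.range (M + 1))]
  · apply Finset.sum_congr rfl
    intro k hk
    rw [Finset.mem_range] at hk
    have hky : Real.exp (k + 1) ≤ y := by
      refine le_trans (Real.exp_le_exp.2 ?_) h1
      have : (k : ℝ) + 1 ≤ (M : ℝ) + 1 := by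
        have : (k : ℝ) ≤ M := by exact_mod_cast Nat.lt_succ_iff.mp hk
        linarith
      linarith
    rw [Set.indicator_of_mem (Set.mem_Ici.2 hky), mul_one]
  · intro k hk
    rw [Finset.mem_range, not_lt] at hk
    have hky : y < Real.exp (k + 1) := by
      refine lt_of_lt_of_le h2 (Real.exp_le_exp.2 ?_)
      have : (M : ℝ) + 1 ≤ (k : ℝ) := by exact_mod_cast hk
      linarith
    rw [Set.indicator_of_notMem (by simpa using not_le.2 hky), mul_zero]

lemma abs_termA (α : ℝ) (ε : ℕ → ℝ) (hε : ∀ n : ℕ, 1 ≤ n → ε n = 1 ∨ ε n = -1) (n : ℕ) :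
    |termA α ε n| = Real.exp (n + 1) * ((n : ℝ) + 1) ^ (-α) := by
  unfold termA
  have hpos : (0 : ℝ) < Real.exp (n + 1) * ((n : ℝ) + 1) ^ (-α) :=
    mul_pos (Real.exp_pos _) (Real.rpow_pos_of_pos (by positivity) _)
  rcases hε (n + 1) (Nat.le_add_left _ _) with h | h <;> rw [h]
  · rw [one_mul, abs_of_pos hpos]
  · rw [neg_one_mul, neg_mul, abs_neg, abs_of_pos hpos]

lemma termA_ratio (α : ℝ) (hα0 : 0 ≤ α) (hα₂ : α ≤ 1) (ε : ℕ → ℝ)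
    (hε : ∀ n : ℕ, 1 ≤ n → ε n = 1 ∨ ε n = -1) (n : ℕ) :
    |termA α ε n| ≤ 2 / Real.exp 1 * |termA α ε (n + 1)| := by
  rw [abs_termA α ε hε, abs_termA α ε hε]
  have hb1 : (0 : ℝ) < (n : ℝ) + 1 := by positivity
  have hb2 : (0 : ℝ) < (n : ℝ) + 1 + 1 := by positivity
  have key : ((n : ℝ) + 1 + 1) ^ α ≤ 2 * ((n : ℝ) + 1) ^ α := by
    calc ((n : ℝ) + 1 + 1) ^ α ≤ (2 * ((n : ℝ) + 1)) ^ α :=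
          Real.rpow_le_rpow hb2.le (by linarith) hα0
      _ = 2 ^ α * ((n : ℝ) + 1) ^ α := Real.mul_rpow (by norm_num) hb1.le
      _ ≤ 2 * ((n : ℝ) + 1) ^ α := by
          have h2 : (2 : ℝ) ^ α ≤ 2 := by
            have h3 : (2 : ℝ) ^ α ≤ (2 : ℝ) ^ (1 : ℝ) :=
              Real.rpow_le_rpow_of_exponent_le one_le_two hα₂
            rwa [Real.rpow_one] at h3
          exact mul_le_mul_of_nonneg_right h2 (Real.rpow_nonneg hb1.le α)
  have hind : ((n : ℝ) + 1) ^ (-α) ≤ 2 * (((n : ℝ) + 1 + 1) ^ (-α)) := by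
    rw [Real.rpow_neg hb1.le, Real.rpow_neg hb2.le, inv_eq_one_div, inv_eq_one_div,
      mul_one_div, div_le_div_iff₀ (Real.rpow_pos_of_pos hb1 α) (Real.rpow_pos_of_pos hb2 α)]
    linarith [key]
  push_cast
  have hE : Real.exp ((n : ℝ) + 1 + 1) = Real.exp ((n : ℝ) + 1) * Real.exp 1 := by
    rw [← Real.exp_add]
  rw [hE]
  have heq : 2 / Real.exp 1 * (Real.exp ((n : ℝ) + 1) * Real.exp 1 * ((n : ℝ) + 1 + 1) ^ (-α)) =
      Real.exp ((n : ℝ) + 1) * (2 * ((n : ℝ) + 1 + 1) ^ (-α)) := by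
    field_simp
  rw [heq]
  exact mul_le_mul_of_nonneg_left hind (Real.exp_pos _).le

lemma SA_dichotomy (α : ℝ) (hα0 : 0 ≤ α) (hα₂ : α ≤ 1) (ε : ℕ → ℝ)
    (hε : ∀ n : ℕ, 1 ≤ n → ε n = 1 ∨ ε n = -1) (n : ℕ) :
    |termA α ε n| / 2 ≤ |SA α ε (n + 1)| ∨ |termA α ε (n + 1)| / 2 ≤ |SA α ε (n + 2)| := by
  by_cases h : |termA α ε n| / 2 ≤ |SA α ε (n + 1)|
  · exact Or.inl h
  · right
    push_neg at h
    have hs : SA α ε (n + 2) = SA α ε (n + 1) + termA α ε (n + 1) :=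
      Finset.sum_range_succ _ _
    have h2 := abs_add_le (SA α ε (n + 1) + termA α ε (n + 1)) (-(SA α ε (n + 1)))
    rw [abs_neg] at h2
    have hsimp : SA α ε (n + 1) + termA α ε (n + 1) + -(SA α ε (n + 1)) = termA α ε (n + 1) := by
      ring
    rw [hsimp] at h2
    have hr := termA_ratio α hα0 hα₂ ε hε n
    have he : (2 : ℝ) ≤ Real.exp 1 := by
      have := Real.exp_one_gt_d9
      linarith
    have h3 : 2 / Real.exp 1 ≤ 1 := by
      rw [div_le_one (Real.exp_pos 1)]; exact he
    have h4 : |termA α ε n| ≤ |termA α ε (n + 1)| := by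
      nlinarith [abs_nonneg (termA α ε (n + 1))]
    rw [hs]
    linarith

lemma termA_lb (α : ℝ) (hα₂ : α ≤ 1) (ε : ℕ → ℝ)
    (hε : ∀ n : ℕ, 1 ≤ n → ε n = 1 ∨ ε n = -1) (n : ℕ) :
    Real.exp (n + 1) / ((n : ℝ) + 1) ≤ |termA α ε n| := by
  rw [abs_termA α ε hε]
  have h1 : ((n : ℝ) + 1) ^ (-(1 : ℝ)) ≤ ((n : ℝ) + 1) ^ (-α) := by
    apply Real.rpow_le_rpow_of_exponent_le
    · have : (0 : ℝ) ≤ (n : ℝ) := Nat.cast_nonneg n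
      linarith
    · linarith
  rw [Real.rpow_neg_one] at h1
  rw [div_eq_mul_inv]
  exact mul_le_mul_of_nonneg_left h1 (Real.exp_pos _).le

/-- The constant `c = (e-1)/(2e²)`. -/
noncomputable def cDia : ℝ := (Real.exp 1 - 1) / (2 * Real.exp 2)

lemma cDia_pos : 0 < cDia := by
  unfold cDia
  have h1 : (1 : ℝ) < Real.exp 1 := by
    have := Real.exp_one_gt_d9; linarith
  have h2 : (0 : ℝ) < 2 * Real.exp 2 := by positivity
  exact div_pos (by linarith) h2

lemma interval_lintegral_lb (α : ℝ) (hα0 : 0 ≤ α) (hα₂ : α ≤ 1) (ε : ℕ → ℝ)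
    (hε : ∀ n : ℕ, 1 ≤ n → ε n = 1 ∨ ε n = -1) (n : ℕ)
    (hgood : |termA α ε n| / 2 ≤ |SA α ε (n + 1)|) :
    ENNReal.ofReal (cDia / ((n : ℝ) + 1)) ≤
      ∫⁻ y in Set.Ico (Real.exp ((n : ℝ) + 1)) (Real.exp ((n : ℝ) + 2)),
        ENNReal.ofReal (|stepA α ε y| / y ^ 2) := by
  set E := Real.exp ((n : ℝ) + 1) with hE
  set e1 := Real.exp 1 with he1
  have hEpos : 0 < E := Real.exp_pos _
  have he1pos : 0 < e1 := Real.exp_pos _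
  have he1gt : (1 : ℝ) < e1 := by
    rw [he1]; have := Real.exp_one_gt_d9; linarith
  have hE2 : Real.exp ((n : ℝ) + 2) = E * e1 := by
    rw [hE, he1, ← Real.exp_add]; ring_nf
  rw [hE2]
  have hA : E / (2 * ((n : ℝ) + 1)) ≤ |SA α ε (n + 1)| := by
    have := termA_lb α hα₂ ε hε n
    rw [hE]
    have hn1 : (0 : ℝ) < (n : ℝ) + 1 := by positivity
    rw [div_le_iff₀ (by positivity)] at *
    nlinarith [abs_nonneg (termA α ε n)]
  set A := |SA α ε (n + 1)| with hAdef
  have hApos : 0 < A := lt_of_lt_of_le (div_pos hEpos (by positivity)) hA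
  -- constant lower bound for the integrand on the interval
  set K : ℝ := A / (E * e1) ^ 2 with hK
  have hKpos : 0 < K := div_pos hApos (pow_pos (mul_pos hEpos he1pos) 2)
  have hptwise : ∀ y ∈ Set.Ico E (E * e1), K ≤ |stepA α ε y| / y ^ 2 := by
    intro y hy
    obtain ⟨hy1, hy2⟩ := hy
    have hystep : stepA α ε y = SA α ε (n + 1) := by
      apply stepA_eq α ε n y hy1
      rw [hE2]; exact hy2
    rw [hystep, hK]
    have hy0 : 0 < y := lt_of_lt_of_le hEpos hy1
    apply div_le_div_of_nonneg_left (abs_nonneg _) (pow_pos hy0 2)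
    nlinarith
  -- reduce to a constant integral
  have hmeas : MeasurableSet (Set.Ico E (E * e1)) := measurableSet_Ico
  have hle : ENNReal.ofReal K * volume (Set.Ico E (E * e1)) ≤
      ∫⁻ y in Set.Ico E (E * e1), ENNReal.ofReal (|stepA α ε y| / y ^ 2) := by
    rw [← lintegral_indicator_const hmeas, ← lintegral_indicator hmeas]
    apply lintegral_mono
    intro y
    by_cases hy : y ∈ Set.Ico E (E * e1)
    · rw [Set.indicator_of_mem hy, Set.indicator_of_mem hy]
      exact ENNReal.ofReal_le_ofReal (hptwise y hy)
    · rw [Set.indicator_of_notMem hy, Set.indicator_of_notMem hy]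
  refine le_trans ?_ hle
  rw [Real.volume_Ico, ← ENNReal.ofReal_mul hKpos.le]
  apply ENNReal.ofReal_le_ofReal
  have hn1 : (0 : ℝ) < (n : ℝ) + 1 := by positivity
  have hkey : cDia / ((n : ℝ) + 1) = (E / (2 * ((n : ℝ) + 1))) / (E * e1) ^ 2 * (E * e1 - E) := by
    unfold cDia
    rw [show Real.exp 2 = e1 * e1 from by rw [he1, ← Real.exp_add]; norm_num]
    field_simp
    ring
  rw [hkey, hK]
  have hme : 0 ≤ E * e1 - E := by nlinarith
  gcongr

lemma harmonic_top (c : ℝ) (hc : 0 < c) :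
    ∑' n : ℕ, ENNReal.ofReal (c / ((n : ℝ) + 2)) = ⊤ := by
  by_contra h
  have h1 : Summable (fun n : ℕ => (c / ((n : ℝ) + 2)).toNNReal) :=
    ENNReal.tsum_coe_ne_top_iff_summable.1 h
  have h2 : Summable (fun n : ℕ => c / ((n : ℝ) + 2)) := by
    have h2' := NNReal.summable_coe.2 h1
    rwa [show (fun n : ℕ => ((c / ((n : ℝ) + 2)).toNNReal : ℝ)) =
        fun n : ℕ => c / ((n : ℝ) + 2) from funext fun n =>
          Real.coe_toNNReal _ (by positivity)] at h2'
  have h3 : Summable (fun n : ℕ => 1 / ((n : ℝ) + 2)) := by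
    have h4 := h2.mul_left c⁻¹
    refine h4.congr fun n => ?_
    field_simp
  have h6 : Summable (fun n : ℕ => 1 / (n : ℝ)) := by
    refine (summable_nat_add_iff 2).1 (h3.congr fun n => ?_)
    push_cast
    ring
  exact Real.not_summable_one_div_natCast h6

/-- For `1/2 < α ≤ 1` and any choice of signs `ε_n ∈ {−1, +1}`, Diamond's integral
`∫_1^∞ |a(y)| y⁻² dy` diverges for `a(y) = Σ_{n≥1} ε_n e^n n^{-α} 1_{[e^n,∞)}(y)`. -/
theorem diamond_integral_diverges (α : ℝ) (hα₁ : 1 / 2 < α) (hα₂ : α ≤ 1)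
    (ε : ℕ → ℝ) (hε : ∀ n : ℕ, 1 ≤ n → ε n = 1 ∨ ε n = -1) :
    ∫⁻ y in Set.Ioi (1 : ℝ), ENNReal.ofReal (|stepA α ε y| / y ^ 2) = ⊤ := by
  have hα0 : 0 ≤ α := by linarith
  set I : ℕ → Set ℝ := fun n => Set.Ico (Real.exp ((n : ℝ) + 1)) (Real.exp ((n : ℝ) + 2))
    with hI
  set g : ℕ → ENNReal := fun n => ∫⁻ y in I n, ENNReal.ofReal (|stepA α ε y| / y ^ 2) with hg
  have hIsub : ∀ n, I n ⊆ Set.Ioi (1 : ℝ) := by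
    intro n y hy
    have h1 : (1 : ℝ) < Real.exp ((n : ℝ) + 1) := by
      calc (1 : ℝ) = Real.exp 0 := Real.exp_zero.symm
        _ < Real.exp ((n : ℝ) + 1) := Real.exp_lt_exp.2 (by positivity)
    exact lt_of_lt_of_le h1 hy.1
  have hdisj : Pairwise (Function.onFun Disjoint I) := by
    have key : ∀ a b : ℕ, a < b → Disjoint (I a) (I b) := by
      intro a b hab
      rw [Set.disjoint_left]
      intro y hy1 hy2
      have hab' : Real.exp ((a : ℝ) + 2) ≤ Real.exp ((b : ℝ) + 1) := by
        apply Real.exp_le_exp.2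
        have : (a : ℝ) + 1 ≤ (b : ℝ) := by exact_mod_cast hab
        linarith
      exact absurd (lt_of_lt_of_le hy1.2 (le_trans hab' hy2.1)) (lt_irrefl y)
    intro m k hmk
    rcases lt_or_gt_of_ne hmk with h | h
    · exact key m k h
    · exact (key k m h).symm
  have hunion : ∫⁻ y in ⋃ n, I n, ENNReal.ofReal (|stepA α ε y| / y ^ 2) = ∑' n, g n :=
    lintegral_iUnion (fun n => measurableSet_Ico) hdisj _
  have hbig : ∑' n, g n ≤
      ∫⁻ y in Set.Ioi (1 : ℝ), ENNReal.ofReal (|stepA α ε y| / y ^ 2) := by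
    rw [← hunion]
    exact lintegral_mono_set (Set.iUnion_subset hIsub)
  have hpair : ∀ n : ℕ, ENNReal.ofReal (cDia / ((n : ℝ) + 2)) ≤ g n + g (n + 1) := by
    intro n
    rcases SA_dichotomy α hα0 hα₂ ε hε n with hgood | hgood
    · have h1 := interval_lintegral_lb α hα0 hα₂ ε hε n hgood
      refine le_trans (ENNReal.ofReal_le_ofReal ?_) (le_trans h1 le_self_add)
      exact div_le_div_of_nonneg_left cDia_pos.le (by positivity) (by linarith)
    · have h1 := interval_lintegral_lb α hα0 hα₂ ε hε (n + 1) hgood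
      refine le_trans ?_ (le_trans h1 le_add_self)
      apply le_of_eq
      congr 1
      push_cast
      ring
  have htop : ∑' n, g n = ⊤ := by
    by_contra hne
    have h2 : ∑' n, (g n + g (n + 1)) ≤ ∑' n, g n + ∑' n, g n := by
      rw [ENNReal.tsum_add]
      exact add_le_add le_rfl
        (ENNReal.tsum_comp_le_tsum_of_injective (add_left_injective 1) g)
    have h3 : (⊤ : ENNReal) ≤ ∑' n, g n + ∑' n, g n :=
      calc (⊤ : ENNReal) = ∑' n : ℕ, ENNReal.ofReal (cDia / ((n : ℝ) + 2)) :=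
            (harmonic_top cDia cDia_pos).symm
        _ ≤ ∑' n, (g n + g (n + 1)) := ENNReal.tsum_le_tsum hpair
        _ ≤ _ := h2
    exact (ENNReal.add_ne_top.2 ⟨hne, hne⟩) (top_le_iff.1 h3)
  rw [← top_le_iff, ← htop]
  exact hbig
end

section
/- Let S be a set of (usual) prime numbers with Σ_{p∈S} 1/p < ∞. Then the set of positive integers having no prime factor in S has natural density ∏_{p∈S} (1 − 1/p): that is, (1/x)·#{ n : 1 ≤ n ≤ x and no p ∈ S divides n } → ∏_{p∈S} (1 − 1/p) as x → ∞, and this product lies in (0, 1]. -/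
open Filter Finset

private lemma count_coprime_block (m a q : ℕ) :
    #{x ∈ Ico a (a + q * m) | m.Coprime x} = q * m.totient := by
  induction q with
  | zero => simp
  | succ q ih =>
      have hsplit : Ico a (a + (q + 1) * m) = Ico a (a + q * m) ∪ Ico (a + q * m) (a + q * m + m) := by
        rw [Finset.Ico_union_Ico_eq_Ico le_self_add le_self_add]
        ring_nf
      rw [hsplit, filter_union, card_union_of_disjoint, ih,
        Nat.filter_coprime_Ico_eq_totient m (a + q * m)]
      · ring
      · exact (Finset.Ico_disjoint_Ico_consecutive a (a + q * m) (a + q * m + m)).mono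
          (filter_subset _ _) (filter_subset _ _)

private lemma count_coprime_bounds (m N : ℕ) (hm : 0 < m) :
    N / m * m.totient ≤ #{x ∈ Icc 1 N | m.Coprime x} ∧
      #{x ∈ Icc 1 N | m.Coprime x} ≤ (N / m + 1) * m.totient := by
  have hIcc : Icc 1 N = Ico 1 (N + 1) := by rw [← Finset.Ico_add_one_right_eq_Icc]
  constructor
  · calc N / m * m.totient = #{x ∈ Ico 1 (1 + N / m * m) | m.Coprime x} :=
          (count_coprime_block m 1 (N / m)).symm
      _ ≤ #{x ∈ Icc 1 N | m.Coprime x} := by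
          rw [hIcc]
          apply card_le_card
          apply filter_subset_filter
          apply Ico_subset_Ico le_rfl
          have := Nat.div_mul_le_self N m
          omega
  · calc #{x ∈ Icc 1 N | m.Coprime x} ≤ #{x ∈ Ico 1 (1 + (N / m + 1) * m) | m.Coprime x} := by
          rw [hIcc]
          apply card_le_card
          apply filter_subset_filter
          apply Ico_subset_Ico le_rfl
          have := Nat.lt_div_mul_add (a := N) hm
          have : N < (N / m + 1) * m := by rw [add_mul, one_mul]; exact Nat.lt_div_mul_add hm
          omega
      _ = (N / m + 1) * m.totient := count_coprime_block m 1 (N / m + 1)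

/-- The count of integers in `[1, N]` coprime to `m` is within `m` of `N * φ(m)/m`. -/
private lemma count_coprime_close (m N : ℕ) (hm : 0 < m) :
    |(#{x ∈ Icc 1 N | m.Coprime x} : ℝ) - N * (m.totient / m)| ≤ m := by
  obtain ⟨h1, h2⟩ := count_coprime_bounds m N hm
  set C : ℕ := #{x ∈ Icc 1 N | m.Coprime x}
  set q : ℕ := N / m
  have hn1 : q * m ≤ N := Nat.div_mul_le_self N m
  have hn2 : N ≤ (q + 1) * m := by
    have : N < (q + 1) * m := by rw [add_mul, one_mul]; exact Nat.lt_div_mul_add hm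
    omega
  have hφm : m.totient ≤ m := Nat.totient_le m
  have hmR : (0 : ℝ) < m := by exact_mod_cast hm
  have h1R : (q : ℝ) * m.totient ≤ C := by exact_mod_cast h1
  have h2R : (C : ℝ) ≤ (q + 1) * m.totient := by exact_mod_cast h2
  have hn1R : (q : ℝ) * m ≤ N := by exact_mod_cast hn1
  have hn2R : (N : ℝ) ≤ (q + 1) * m := by exact_mod_cast hn2
  have hφmR : (m.totient : ℝ) ≤ m := by exact_mod_cast hφm
  have hφ0 : (0 : ℝ) ≤ m.totient := by positivity
  have key : (C : ℝ) - N * (m.totient / m) = (C * m - N * m.totient) / m := by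
    field_simp
  rw [key, abs_div, abs_of_pos hmR, div_le_iff₀ hmR]
  rw [abs_le]
  constructor <;> nlinarith

/-- For `0 < t ≤ 1/2`, `exp (-2 t) ≤ 1 - t`. -/
private lemma exp_neg_two_le (t : ℝ) (ht0 : 0 < t) (ht : t ≤ 1 / 2) :
    Real.exp (-(2 * t)) ≤ 1 - t := by
  have h1 : 1 + 2 * t ≤ Real.exp (2 * t) := by
    have := Real.add_one_le_exp (2 * t); linarith
  have h2 : Real.exp (-(2 * t)) = 1 / Real.exp (2 * t) := by
    rw [Real.exp_neg]; ring
  have hpos : (0 : ℝ) < 1 + 2 * t := by linarith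
  have h3 : 1 / Real.exp (2 * t) ≤ 1 / (1 + 2 * t) := by
    apply one_div_le_one_div_of_le hpos h1
  have h4 : 1 / (1 + 2 * t) ≤ 1 - t := by
    rw [div_le_iff₀ hpos]; nlinarith
  linarith [h2 ▸ h3]

/-- If `S` is a set of primes with `Σ_{p∈S} 1/p < ∞`, then the positive integers
with no prime factor in `S` have natural density `∏_{p∈S} (1 - 1/p) ∈ (0, 1]`. -/
theorem density_of_deleted_primes (S : Set ℕ) (hS : ∀ p ∈ S, Nat.Prime p)
    (hsum : Summable (fun p : S => (1 : ℝ) / (p : ℕ))) :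
    0 < (∏' p : S, (1 - 1 / ((p : ℕ) : ℝ))) ∧
    (∏' p : S, (1 - 1 / ((p : ℕ) : ℝ))) ≤ 1 ∧
    Tendsto (fun x : ℝ =>
        (Nat.card {n : ℕ | 1 ≤ n ∧ (n : ℝ) ≤ x ∧ ∀ p ∈ S, ¬ p ∣ n} : ℝ) / x)
      atTop (nhds (∏' p : S, (1 - 1 / ((p : ℕ) : ℝ)))) := by
  classical
  set f : S → ℝ := fun p => 1 - 1 / ((p : ℕ) : ℝ) with hf
  -- basic facts about the factors
  have hp2 : ∀ p : S, (2 : ℕ) ≤ (p : ℕ) := fun p => (hS p p.2).two_le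
  have hp0R : ∀ p : S, (0 : ℝ) < ((p : ℕ) : ℝ) := fun p => by
    have := hp2 p; positivity
  have hf_pos : ∀ p : S, 0 < f p := by
    intro p
    have h2 : (2 : ℝ) ≤ ((p : ℕ) : ℝ) := by exact_mod_cast hp2 p
    have : 1 / ((p : ℕ) : ℝ) ≤ 1 / 2 := by
      apply one_div_le_one_div_of_le; norm_num; exact h2
    simp only [hf]; linarith
  have hf_le_one : ∀ p : S, f p ≤ 1 := by
    intro p
    have := hp0R p
    have : 0 < 1 / ((p : ℕ) : ℝ) := by positivity
    simp only [hf]; linarith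
  have hf_nonneg : ∀ p : S, 0 ≤ f p := fun p => (hf_pos p).le
  -- the partial products are antitone in the finset
  have hanti : Antitone fun F : Finset S => ∏ p ∈ F, f p := by
    intro F G hFG
    show (∏ p ∈ G, f p) ≤ ∏ p ∈ F, f p
    have : ∏ p ∈ G, f p = (∏ p ∈ G \ F, f p) * ∏ p ∈ F, f p := (Finset.prod_sdiff hFG).symm
    rw [this]
    have h1 : ∏ p ∈ G \ F, f p ≤ 1 :=
      Finset.prod_le_one (fun p _ => hf_nonneg p) (fun p _ => hf_le_one p)
    have h2 : 0 ≤ ∏ p ∈ F, f p := Finset.prod_nonneg fun p _ => hf_nonneg p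
    nlinarith
  -- lower bound for all partial products
  set T : ℝ := ∑' p : S, (1 : ℝ) / ((p : ℕ) : ℝ) with hT
  set c : ℝ := Real.exp (-(2 * T)) with hc
  have hc_pos : 0 < c := Real.exp_pos _
  have hlow : ∀ F : Finset S, c ≤ ∏ p ∈ F, f p := by
    intro F
    have h1 : ∀ p ∈ F, Real.exp (-(2 * (1 / ((p : ℕ) : ℝ)))) ≤ f p := by
      intro p _
      apply exp_neg_two_le
      · have := hp0R p; positivity
      · have h2 : (2 : ℝ) ≤ ((p : ℕ) : ℝ) := by exact_mod_cast hp2 p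
        rw [div_le_div_iff₀ (hp0R p) (by norm_num)]; linarith
    calc c ≤ Real.exp (-(2 * ∑ p ∈ F, 1 / ((p : ℕ) : ℝ))) := by
          apply Real.exp_le_exp.2
          have : ∑ p ∈ F, (1 : ℝ) / ((p : ℕ) : ℝ) ≤ T :=
            Summable.sum_le_tsum F (fun p _ => by positivity) hsum
          linarith
      _ = ∏ p ∈ F, Real.exp (-(2 * (1 / ((p : ℕ) : ℝ)))) := by
          rw [← Real.exp_sum]
          congr 1
          rw [Finset.mul_sum, ← Finset.sum_neg_distrib]
      _ ≤ ∏ p ∈ F, f p := Finset.prod_le_prod (fun p _ => (Real.exp_pos _).le) h1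
  -- the product converges
  have hbdd : BddBelow (Set.range fun F : Finset S => ∏ p ∈ F, f p) := by
    refine ⟨c, ?_⟩
    rintro x ⟨F, rfl⟩
    exact hlow F
  set L : ℝ := ⨅ F : Finset S, ∏ p ∈ F, f p with hL
  have htend : Tendsto (fun F : Finset S => ∏ p ∈ F, f p) atTop (nhds L) :=
    tendsto_atTop_ciInf hanti hbdd
  have hHasProd : HasProd f L := htend
  have htprod : ∏' p : S, f p = L := hHasProd.tprod_eq
  have hcL : c ≤ L := le_ciInf hlow
  have hL_pos : 0 < L := lt_of_lt_of_le hc_pos hcL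
  have hL_le_one : L ≤ 1 := by
    have := ciInf_le hbdd (∅ : Finset S)
    simpa using this
  refine ⟨htprod ▸ hL_pos, htprod ▸ hL_le_one, ?_⟩
  rw [htprod]
  -- Now the density statement.
  rw [Metric.tendsto_atTop]
  intro ε hε
  set ε' : ℝ := ε / 4 with hε'def
  have hε' : 0 < ε' := by positivity
  -- choose a finset controlling the tail of the sum
  obtain ⟨F₀, hF₀⟩ := summable_iff_vanishing_norm.mp hsum ε' hε'
  -- choose a finset controlling the product
  have h2 := (Metric.tendsto_nhds.mp htend) ε' hε'
  obtain ⟨F₂, hF₂⟩ := eventually_atTop.mp h2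
  set F : Finset S := F₀ ∪ F₂ with hFdef
  have hFprod : |(∏ p ∈ F, f p) - L| < ε' := by
    have := hF₂ F le_sup_right
    rwa [Real.dist_eq] at this
  set ρ : ℝ := ∏ p ∈ F, f p with hρ
  set m : ℕ := ∏ p ∈ F, (p : ℕ) with hm
  have hm_pos : 0 < m := Finset.prod_pos fun p _ => (hS p p.2).pos
  -- totient of m
  have htot : (m.totient : ℝ) / m = ρ := by
    have key : ∀ G : Finset S, (∏ p ∈ G, (p : ℕ)).totient = ∏ p ∈ G, ((p : ℕ) - 1) := by
      intro G
      induction G using Finset.cons_induction with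
      | empty => simp
      | cons a G ha ih =>
          rw [Finset.prod_cons, Finset.prod_cons, ← ih]
          rw [Nat.totient_mul, Nat.totient_prime (hS a a.2)]
          apply Nat.Coprime.prod_right
          intro q hq
          have hne : (a : ℕ) ≠ (q : ℕ) := by
            intro h
            exact ha (by rwa [show a = q from Subtype.ext h])
          exact (Nat.coprime_primes (hS a a.2) (hS q q.2)).2 hne
    rw [hρ, hm, key F]
    rw [Nat.cast_prod, Nat.cast_prod]
    rw [← Finset.prod_div_distrib]
    apply Finset.prod_congr rfl
    intro p _
    have h1 : (1 : ℕ) ≤ (p : ℕ) := (hS p p.2).one_le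
    have hp0 : ((p : ℕ) : ℝ) ≠ 0 := (hp0R p).ne'
    rw [Nat.cast_sub h1, Nat.cast_one]
    simp only [hf]
    field_simp
  -- choose the threshold
  set X : ℝ := max 1 ((m + 1) / ε') with hX
  refine ⟨X, fun x hx => ?_⟩
  have hx1 : (1 : ℝ) ≤ x := le_trans (le_max_left _ _) hx
  have hx0 : (0 : ℝ) < x := by linarith
  set N : ℕ := ⌊x⌋₊ with hN
  have hN1 : 1 ≤ N := Nat.le_floor (by exact_mod_cast hx1)
  have hNx : (N : ℝ) ≤ x := Nat.floor_le hx0.le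
  have hxN : x < N + 1 := Nat.lt_floor_add_one x
  -- identify the set with a finset
  have hset : {n : ℕ | 1 ≤ n ∧ (n : ℝ) ≤ x ∧ ∀ p ∈ S, ¬ p ∣ n} =
      ↑({n ∈ Icc 1 N | ∀ p ∈ S, ¬ p ∣ n}) := by
    ext n
    simp only [Set.mem_setOf_eq, coe_filter, mem_Icc, Set.mem_setOf_eq]
    constructor
    · rintro ⟨h1, h2, h3⟩
      exact ⟨⟨h1, Nat.le_floor h2⟩, h3⟩
    · rintro ⟨⟨h1, h2⟩, h3⟩
      refine ⟨h1, le_trans ?_ hNx, h3⟩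
      exact_mod_cast h2
  have hcard : (Nat.card {n : ℕ | 1 ≤ n ∧ (n : ℝ) ≤ x ∧ ∀ p ∈ S, ¬ p ∣ n} : ℝ)
      = (#{n ∈ Icc 1 N | ∀ p ∈ S, ¬ p ∣ n} : ℝ) := by
    rw [hset, Nat.card_coe_set_eq, Set.ncard_coe_finset]
  set CS : ℕ := #{n ∈ Icc 1 N | ∀ p ∈ S, ¬ p ∣ n} with hCS
  set CF : ℕ := #{n ∈ Icc 1 N | m.Coprime n} with hCF
  -- CS ≤ CF
  have hCSCF : CS ≤ CF := by
    apply card_le_card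
    intro n hn
    simp only [mem_filter] at hn ⊢
    refine ⟨hn.1, ?_⟩
    rw [hm, Nat.coprime_prod_left_iff]
    intro p hp
    exact ((hS p p.2).coprime_iff_not_dvd).mpr (hn.2 p p.2)
  -- the set of "bad" primes
  set G : Finset S := ((Icc 1 N).subtype (· ∈ S)).filter (· ∉ F) with hG
  have hGdisj : Disjoint G F₀ := by
    rw [Finset.disjoint_left]
    intro p hp hp0
    simp only [hG, mem_filter] at hp
    exact hp.2 (Finset.mem_union_left _ hp0)
  have hGsum : ∑ p ∈ G, (1 : ℝ) / ((p : ℕ) : ℝ) < ε' := by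
    have := hF₀ G hGdisj
    rwa [Real.norm_eq_abs, abs_of_nonneg (Finset.sum_nonneg fun p _ => by positivity)] at this
  have hGsum0 : 0 ≤ ∑ p ∈ G, (1 : ℝ) / ((p : ℕ) : ℝ) :=
    Finset.sum_nonneg fun p _ => by positivity
  -- CF ≤ CS + N * (sum over G)
  have hCFCS : (CF : ℝ) ≤ CS + N * ∑ p ∈ G, (1 : ℝ) / ((p : ℕ) : ℝ) := by
    have hsubset : {n ∈ Icc 1 N | m.Coprime n} ⊆
        {n ∈ Icc 1 N | ∀ p ∈ S, ¬ p ∣ n} ∪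
          G.biUnion (fun p => {n ∈ Icc 1 N | (p : ℕ) ∣ n}) := by
      intro n hn
      simp only [mem_filter, mem_Icc] at hn
      obtain ⟨⟨hn1, hn2⟩, hcop⟩ := hn
      by_cases hps : ∀ p ∈ S, ¬ p ∣ n
      · exact Finset.mem_union_left _ (by
          simp only [mem_filter, mem_Icc]
          exact ⟨⟨hn1, hn2⟩, hps⟩)
      · push_neg at hps
        obtain ⟨p, hpS, hpn⟩ := hps
        have hp := hS p hpS
        have hpF : (⟨p, hpS⟩ : S) ∉ F := by
          intro hmem
          have hpm : p ∣ m := by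
            rw [hm]
            exact Finset.dvd_prod_of_mem _ hmem
          have h1 : p ∣ Nat.gcd m n := Nat.dvd_gcd hpm hpn
          rw [Nat.Coprime] at hcop
          rw [hcop] at h1
          exact hp.one_lt.ne' (Nat.dvd_one.mp h1)
        have hpN : p ≤ N := le_trans (Nat.le_of_dvd hn1 hpn) hn2
        apply Finset.mem_union_right
        apply Finset.mem_biUnion.mpr
        refine ⟨⟨p, hpS⟩, ?_, ?_⟩
        · simp only [hG, mem_filter, Finset.mem_subtype, mem_Icc]
          exact ⟨⟨hp.one_le, hpN⟩, hpF⟩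
        · simp [mem_filter, mem_Icc, hn1, hn2, hpn]
    have hcard2 : CF ≤ CS + ∑ p ∈ G, N / (p : ℕ) := by
      calc CF ≤ #({n ∈ Icc 1 N | ∀ p ∈ S, ¬ p ∣ n} ∪
            G.biUnion (fun p => {n ∈ Icc 1 N | (p : ℕ) ∣ n})) := card_le_card hsubset
        _ ≤ CS + #(G.biUnion (fun p => {n ∈ Icc 1 N | (p : ℕ) ∣ n})) := card_union_le _ _
        _ ≤ CS + ∑ p ∈ G, #({n ∈ Icc 1 N | (p : ℕ) ∣ n}) :=
            Nat.add_le_add_left (card_biUnion_le) _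
        _ = CS + ∑ p ∈ G, N / (p : ℕ) := by
            congr 1
            apply Finset.sum_congr rfl
            intro p _
            have : Icc 1 N = Ioc 0 N := rfl
            rw [this, Nat.Ioc_filter_dvd_card_eq_div]
    calc (CF : ℝ) ≤ CS + ∑ p ∈ G, ((N / (p : ℕ) : ℕ) : ℝ) := by exact_mod_cast hcard2
      _ ≤ CS + ∑ p ∈ G, (N : ℝ) * (1 / ((p : ℕ) : ℝ)) := by
          apply add_le_add_right
          apply Finset.sum_le_sum
          intro p _
          rw [mul_one_div]
          exact Nat.cast_div_le
      _ = CS + N * ∑ p ∈ G, (1 : ℝ) / ((p : ℕ) : ℝ) := by rw [Finset.mul_sum]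
  -- the finite count is close to ρ
  have hclose : |(CF : ℝ) - N * ((m.totient : ℝ) / m)| ≤ m := count_coprime_close m N hm_pos
  -- put everything together
  rw [Real.dist_eq, hcard]
  have hmR : (0 : ℝ) < m := by exact_mod_cast hm_pos
  have hNR : (1 : ℝ) ≤ N := by exact_mod_cast hN1
  have hXx : ((m : ℝ) + 1) / ε' ≤ x := le_trans (le_max_right _ _) hx
  have hCFx : |(CF : ℝ) / x - ρ| ≤ ε' := by
    have h1 : (CF : ℝ) / x - ρ = ((CF - N * ((m.totient : ℝ) / m)) + ((m.totient : ℝ) / m) * (N - x)) / x := by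
      rw [htot]; field_simp; ring
    have hρ1 : (m.totient : ℝ) / m ≤ 1 := by
      rw [div_le_one hmR]; exact_mod_cast Nat.totient_le m
    have hρ0 : (0 : ℝ) ≤ (m.totient : ℝ) / m := by positivity
    have hxNlt : 0 ≤ x - N := by linarith
    have hxN1 : x - N ≤ 1 := by linarith
    have h2 : |(CF : ℝ) - N * ((m.totient : ℝ) / m) + ((m.totient : ℝ) / m) * (N - x)| ≤ m + 1 := by
      have := abs_add_le ((CF : ℝ) - N * ((m.totient : ℝ) / m)) (((m.totient : ℝ) / m) * (N - x))
      have h3 : |((m.totient : ℝ) / m) * (N - x)| ≤ 1 := by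
        rw [abs_mul, abs_of_nonneg hρ0, abs_of_nonpos (by linarith)]
        calc (m.totient : ℝ) / m * -(N - x) ≤ 1 * 1 := by
              apply mul_le_mul hρ1 (by linarith) (by linarith) zero_le_one
          _ = 1 := one_mul 1
      linarith
    rw [h1, abs_div, abs_of_pos hx0, div_le_iff₀ hx0]
    calc |(CF : ℝ) - N * ((m.totient : ℝ) / m) + ((m.totient : ℝ) / m) * (N - x)| ≤ m + 1 := h2
      _ ≤ ε' * x := by
          rw [← div_le_iff₀' hε']
          calc ((m : ℝ) + 1) / ε' = ((m : ℝ) + 1) * (1 / ε') := by ring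
            _ = ((m : ℝ) + 1) / ε' := by ring
            _ ≤ x := hXx
  have hCSx : |(CS : ℝ) / x - (CF : ℝ) / x| ≤ ε' := by
    have hle : (CS : ℝ) ≤ CF := by exact_mod_cast hCSCF
    have hge : (CF : ℝ) - CS ≤ N * ∑ p ∈ G, (1 : ℝ) / ((p : ℕ) : ℝ) := by linarith
    have habs : |(CS : ℝ) / x - (CF : ℝ) / x| = ((CF : ℝ) - CS) / x := by
      rw [abs_sub_comm, ← sub_div, abs_div, abs_of_pos hx0, abs_of_nonneg (by linarith)]
    rw [habs, div_le_iff₀ hx0]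
    calc (CF : ℝ) - CS ≤ N * ∑ p ∈ G, (1 : ℝ) / ((p : ℕ) : ℝ) := hge
      _ ≤ x * ε' := by
          apply mul_le_mul hNx hGsum.le hGsum0 hx0.le
      _ = ε' * x := mul_comm x ε'
  calc |(CS : ℝ) / x - L| ≤ |(CS : ℝ) / x - (CF : ℝ) / x| + |(CF : ℝ) / x - ρ| + |ρ - L| := by
        have := abs_sub_le ((CS : ℝ) / x) ((CF : ℝ) / x) L
        have := abs_sub_le ((CF : ℝ) / x) ρ L
        linarith [abs_sub_le ((CS : ℝ) / x) ((CF : ℝ) / x) L,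
          abs_sub_le ((CF : ℝ) / x) ρ L]
    _ < ε' + ε' + ε' := by
        apply add_lt_add_of_le_of_lt
        apply add_le_add hCSx hCFx
        exact hFprod
    _ < ε := by rw [hε'def]; linarith
end

section
/- Let (q_i)_{i∈ℕ} be a sequence of reals with q_i > 1 for all i, the q_i pairwise distinct, and Σ_i 1/q_i < ∞. For x ≥ 1 let N(x) be the number of pairs (n, m) where n is a positive integer and m : ℕ → ℕ is finitely supported, such that n · ∏_i q_i^{m_i} ≤ x. Then N(x) is finite for every x and N(x)/x → ∏_i (1 − 1/q_i)^{−1} as x → ∞, and this product lies in (0, ∞). -/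
open Filter

/-- The generalized integers generated by the usual positive integers together with
the extra generators `q_i`, counted with multiplicity up to `x`: the set of pairs
`(n, m)` with `n ≥ 1`, `m : ℕ →₀ ℕ` finitely supported, and `n · ∏_i q_i^{m_i} ≤ x`. -/
def genInt (q : ℕ → ℝ) (x : ℝ) : Set (ℕ × (ℕ →₀ ℕ)) :=
  {p | 1 ≤ p.1 ∧ (p.1 : ℝ) * (p.2.prod fun i k => q i ^ k) ≤ x}

namespace GenIntAux

/-- The weight of a finsupp: `∏ (1/q i)^(m i)`. -/
noncomputable def W (q : ℕ → ℝ) (m : ℕ →₀ ℕ) : ℝ := m.prod fun i k => (1 / q i) ^ k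

variable {q : ℕ → ℝ}

lemma one_le_prodR {s : Finset ℕ} {f : ℕ → ℝ} (h : ∀ i ∈ s, 1 ≤ f i) :
    1 ≤ ∏ i ∈ s, f i := by
  calc (1 : ℝ) = ∏ _i ∈ s, 1 := Finset.prod_const_one.symm
    _ ≤ ∏ i ∈ s, f i := Finset.prod_le_prod (fun i _ => zero_le_one) h

lemma prod_le_prod_subsetR {s t : Finset ℕ} {f : ℕ → ℝ} (hst : s ⊆ t)
    (h : ∀ i ∈ t, 1 ≤ f i) : ∏ i ∈ s, f i ≤ ∏ i ∈ t, f i := by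
  rw [← Finset.prod_sdiff hst]
  refine le_mul_of_one_le_left (Finset.prod_nonneg fun i hi => le_trans zero_le_one (h i (hst hi))) ?_
  exact one_le_prodR fun i hi => h i (Finset.mem_sdiff.mp hi).1

lemma one_le_P (hq : ∀ i, 1 < q i) (m : ℕ →₀ ℕ) :
    1 ≤ m.prod fun i k => q i ^ k := by
  rw [Finsupp.prod]
  exact one_le_prodR fun i _ => one_le_pow₀ (hq i).le

lemma P_pos (hq : ∀ i, 1 < q i) (m : ℕ →₀ ℕ) :
    0 < m.prod fun i k => q i ^ k :=
  lt_of_lt_of_le one_pos (one_le_P hq m)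

lemma W_eq (m : ℕ →₀ ℕ) : W q m = (m.prod fun i k => q i ^ k)⁻¹ := by
  rw [W, Finsupp.prod, Finsupp.prod, ← Finset.prod_inv_distrib]
  exact Finset.prod_congr rfl fun i _ => by rw [one_div, inv_pow]

lemma W_pos (hq : ∀ i, 1 < q i) (m : ℕ →₀ ℕ) : 0 < W q m := by
  rw [W_eq]; exact inv_pos.mpr (P_pos hq m)

lemma W_factor (a : ℕ) (m : ℕ →₀ ℕ) :
    W q m = (1 / q a) ^ (m a) * W q (m.erase a) := by
  conv_lhs => rw [W, ← Finsupp.single_add_erase a m]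
  rw [Finsupp.prod_add_index' (fun i => pow_zero _) (fun i b₁ b₂ => pow_add _ _ _)]
  congr 1
  exact Finsupp.prod_single_index (pow_zero _)

set_option maxHeartbeats 1000000 in
lemma hasSum_W (hq : ∀ i, 1 < q i) (s : Finset ℕ) :
    HasSum (fun m : ℕ →₀ ℕ => if m.support ⊆ s then W q m else 0)
      (∏ i ∈ s, (1 - 1 / q i)⁻¹) := by
  classical
  have hq0 : ∀ i, 0 < q i := fun i => lt_trans one_pos (hq i)
  induction s using Finset.induction_on with
  | empty =>
    rw [Finset.prod_empty]
    have h : ∀ m : ℕ →₀ ℕ,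
        (if m.support ⊆ (∅ : Finset ℕ) then W q m else 0) = if m = 0 then 1 else 0 := by
      intro m
      by_cases h : m = 0
      · subst h
        simp [W]
      · rw [if_neg h, if_neg]
        simpa [Finset.subset_empty, Finsupp.support_eq_empty] using h
    simp only [h]
    exact hasSum_ite_eq (0 : ℕ →₀ ℕ) (1 : ℝ)
  | @insert a s' ha ih =>
    have hgeom : HasSum (fun k : ℕ => (1 / q a) ^ k) (1 - 1 / q a)⁻¹ :=
      hasSum_geometric_of_lt_one (div_nonneg zero_le_one (hq0 a).le)
        (by rw [div_lt_one (hq0 a)]; exact hq a)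
    have hnn : ∀ m : ℕ →₀ ℕ, 0 ≤ if m.support ⊆ s' then W q m else 0 := by
      intro m; split_ifs
      · exact (W_pos hq m).le
      · exact le_rfl
    have h1 : 0 ≤ fun k : ℕ => (1 / q a) ^ k :=
      Pi.le_def.mpr fun k => pow_nonneg (div_nonneg zero_le_one (hq0 a).le) k
    have h2 : (0 : (ℕ →₀ ℕ) → ℝ) ≤ fun m : ℕ →₀ ℕ => if m.support ⊆ s' then W q m else 0 :=
      Pi.le_def.mpr hnn
    have hsummul := Summable.mul_of_nonneg hgeom.summable ih.summable h1 h2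
    have hmul := hgeom.mul ih hsummul
    have hj_inj : Function.Injective
        (fun m : ℕ →₀ ℕ => ((m a, m.erase a) : ℕ × (ℕ →₀ ℕ))) := by
      intro m₁ m₂ h
      have h1' : m₁ a = m₂ a := congrArg Prod.fst h
      have h2' : m₁.erase a = m₂.erase a := congrArg Prod.snd h
      calc m₁ = Finsupp.single a (m₁ a) + m₁.erase a := (Finsupp.single_add_erase a m₁).symm
        _ = Finsupp.single a (m₂ a) + m₂.erase a := by rw [h1', h2']
        _ = m₂ := Finsupp.single_add_erase a m₂
    have hrange : ∀ p ∉ Set.range (fun m : ℕ →₀ ℕ => ((m a, m.erase a) : ℕ × (ℕ →₀ ℕ))),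
        (1 / q a) ^ p.1 * (if p.2.support ⊆ s' then W q p.2 else 0) = 0 := by
      intro p hp
      rw [if_neg, mul_zero]
      intro hsub
      apply hp
      have haa : a ∉ p.2.support := fun h => ha (hsub h)
      refine ⟨Finsupp.single a p.1 + p.2, ?_⟩
      have ha2 : (Finsupp.single a p.1 + p.2) a = p.1 := by
        rw [Finsupp.add_apply, Finsupp.single_eq_same,
          Finsupp.notMem_support_iff.mp haa, add_zero]
      have ha3 : (Finsupp.single a p.1 + p.2).erase a = p.2 := by
        rw [Finsupp.erase_add, Finsupp.erase_single, zero_add,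
          Finsupp.erase_of_notMem_support haa]
      dsimp only
      rw [ha2, ha3]
    have key := (hj_inj.hasSum_iff hrange).mpr hmul
    rw [Finset.prod_insert ha]
    convert key using 1
    funext m
    show (if m.support ⊆ insert a s' then W q m else 0)
      = (1 / q a) ^ (m a) * (if (m.erase a).support ⊆ s' then W q (m.erase a) else 0)
    by_cases hc : m.support ⊆ insert a s'
    · have hc' : (m.erase a).support ⊆ s' := by
        rw [Finsupp.support_erase]
        exact Finset.subset_insert_iff.mp hc
      rw [if_pos hc, if_pos hc', ← W_factor]
    · have hc' : ¬ (m.erase a).support ⊆ s' := by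
        intro h
        apply hc
        apply Finset.subset_insert_iff.mpr
        rwa [← Finsupp.support_erase (a := a)]
      rw [if_neg hc, if_neg hc', mul_zero]

end GenIntAux

open GenIntAux

/-- Adjoining to the usual primes pairwise distinct generators `q_i > 1` with
`Σ_i 1/q_i < ∞` yields generalized integers with finite counting function `N(x)`
and density `∏_i (1 - 1/q_i)⁻¹ ∈ (0, ∞)`. -/
theorem density_of_adjoined_generators (q : ℕ → ℝ) (hq : ∀ i, 1 < q i)
    (hinj : Function.Injective q) (hsum : Summable (fun i => 1 / q i)) :
    (∀ x : ℝ, (genInt q x).Finite) ∧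
    0 < (∏' i : ℕ, (1 - 1 / q i)⁻¹) ∧
    Tendsto (fun x : ℝ => (Nat.card (genInt q x) : ℝ) / x) atTop
      (nhds (∏' i : ℕ, (1 - 1 / q i)⁻¹)) := by
  classical
  have hq0 : ∀ i, 0 < q i := fun i => lt_trans one_pos (hq i)
  set t : ℕ → ℝ := fun i => (1 - 1 / q i)⁻¹ with ht
  have hr_pos : ∀ i, 0 < 1 / q i := fun i => div_pos one_pos (hq0 i)
  have hr_lt : ∀ i, 1 / q i < 1 := fun i => by
    rw [div_lt_one (hq0 i)]; exact hq i
  have ht_pos : ∀ i, 0 < t i := fun i => inv_pos.mpr (by linarith [hr_lt i])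
  have ht_one : ∀ i, 1 ≤ t i := fun i => (one_le_inv₀ (by linarith [hr_lt i])).mpr (by linarith [hr_pos i])
  -- summability of the logs of t
  have hlog_sum : Summable fun i => Real.log (t i) := by
    apply Summable.of_norm_bounded_eventually (g := fun i => 2 * (1 / q i)) (hsum.mul_left 2)
    have h0 : ∀ᶠ i in cofinite, 1 / q i < 1 / 2 :=
      hsum.tendsto_cofinite_zero.eventually_lt_const (by norm_num)
    filter_upwards [h0] with i hi
    have h1 : (0 : ℝ) < 1 - 1 / q i := by linarith [hr_lt i]
    have hlog_nonneg : 0 ≤ Real.log (t i) := Real.log_nonneg (ht_one i)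
    rw [Real.norm_eq_abs, abs_of_nonneg hlog_nonneg]
    have h2 : Real.log (t i) ≤ t i - 1 := by
      have := Real.log_le_sub_one_of_pos (ht_pos i)
      linarith
    have h3 : t i ≤ 1 + 2 * (1 / q i) := by
      rw [ht]
      dsimp only
      rw [inv_eq_one_div, div_le_iff₀ h1]
      nlinarith [hr_pos i]
    linarith
  -- the infinite product
  have hC_eq : (∏' i, t i) = Real.exp (∑' i, Real.log (t i)) := by
    exact (Real.rexp_tsum_eq_tprod (fun i => ht_pos i) hlog_sum).symm
  have hC_pos : 0 < ∏' i, t i := by rw [hC_eq]; exact Real.exp_pos _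
  have hProd : HasProd t (∏' i, t i) :=
    by rw [hC_eq]; exact Real.hasProd_of_hasSum_log (fun i => ht_pos i) hlog_sum.hasSum
  have hprod_le : ∀ s : Finset ℕ, (∏ i ∈ s, t i) ≤ ∏' i, t i := by
    intro s
    apply ge_of_tendsto hProd
    filter_upwards [eventually_ge_atTop s] with s' hs'
    exact prod_le_prod_subsetR hs' fun i _ => ht_one i
  -- summability of W and the Euler product identity
  have hWnn : ∀ m : ℕ →₀ ℕ, 0 ≤ W q m := fun m => (W_pos hq m).le
  have hsum_le : ∀ u : Finset (ℕ →₀ ℕ), ∑ m ∈ u, W q m ≤ ∏' i, t i := by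
    intro u
    set s : Finset ℕ := u.sup fun m => m.support with hs
    have hsub : ∀ m ∈ u, m.support ⊆ s := fun m hm => Finset.le_sup hm
    calc ∑ m ∈ u, W q m = ∑ m ∈ u, (if m.support ⊆ s then W q m else 0) :=
          Finset.sum_congr rfl fun m hm => by rw [if_pos (hsub m hm)]
      _ ≤ ∏ i ∈ s, t i := by
          apply sum_le_hasSum u _ (hasSum_W hq s)
          intro m _
          split_ifs
          · exact hWnn m
          · exact le_rfl
      _ ≤ ∏' i, t i := hprod_le s
  have hWsum : Summable (W q) := summable_of_sum_le hWnn hsum_le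
  have htsum_eq : ∑' m, W q m = ∏' i, t i := by
    apply le_antisymm (Summable.tsum_le_of_sum_le hWsum hsum_le)
    apply le_of_tendsto hProd
    filter_upwards with s
    calc ∏ i ∈ s, t i = ∑' m, (if (m : ℕ →₀ ℕ).support ⊆ s then W q m else 0) :=
          ((hasSum_W hq s).tsum_eq).symm
      _ ≤ ∑' m, W q m := by
          apply Summable.tsum_le_tsum _ (hasSum_W hq s).summable hWsum
          intro m
          split_ifs
          · exact le_rfl
          · exact hWnn m
  -- finiteness of the set of generators below x
  have hSfin : ∀ x : ℝ, {i : ℕ | q i ≤ x}.Finite := by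
    intro x
    have hev : ∀ᶠ i in cofinite, ¬ q i ≤ x := by
      filter_upwards [hsum.tendsto_cofinite_zero.eventually_lt_const
        (show (0 : ℝ) < 1 / max x 1 by positivity)] with i hi
      have hmax : max x 1 < q i := by
        rw [div_lt_div_iff₀ (hq0 i) (by positivity)] at hi
        linarith
      exact not_le.mpr (lt_of_le_of_lt (le_max_left x 1) hmax)
    have := Filter.eventually_cofinite.mp hev
    simpa using this
  -- finiteness of the set of weights with P m ≤ x
  have hMfin : ∀ x : ℝ, {m : ℕ →₀ ℕ | (m.prod fun i k => q i ^ k) ≤ x}.Finite := by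
    intro x
    set s : Finset ℕ := (hSfin x).toFinset with hsdef
    set b : ℕ →₀ ℕ := Finsupp.indicator s (fun i _ => ⌈(x - 1) / (q i - 1)⌉₊) with hb
    apply (Set.finite_Iic b).subset
    intro m hm
    rw [Set.mem_Iic, Finsupp.le_def]
    intro i
    by_cases hi : i ∈ m.support
    · have hP : q i ^ (m i) ≤ m.prod fun j k => q j ^ k := by
        rw [Finsupp.prod, ← Finset.mul_prod_erase _ _ hi]
        exact le_mul_of_one_le_right (pow_nonneg (hq0 i).le _)
          (one_le_prodR fun j _ => one_le_pow₀ (hq j).le)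
      have hPx : q i ^ (m i) ≤ x := le_trans hP hm
      have hqi : q i ≤ x :=
        le_trans (le_self_pow₀ (hq i).le (Finsupp.mem_support_iff.mp hi)) hPx
      have his : i ∈ s := (hSfin x).mem_toFinset.mpr hqi
      have hbi : b i = ⌈(x - 1) / (q i - 1)⌉₊ := Finsupp.indicator_of_mem his _
      rw [hbi]
      have h1 : 1 + (m i : ℝ) * (q i - 1) ≤ q i ^ (m i) := by
        have h := one_add_mul_le_pow (a := q i - 1) (by linarith [hq i]) (m i)
        have : 1 + (q i - 1) = q i := by ring
        rwa [this] at h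
      have h2 : (m i : ℝ) ≤ (x - 1) / (q i - 1) := by
        rw [le_div_iff₀ (by linarith [hq i])]
        nlinarith
      have h3 : (m i : ℝ) ≤ (⌈(x - 1) / (q i - 1)⌉₊ : ℝ) := h2.trans (Nat.le_ceil _)
      exact_mod_cast h3
    · simp [Finsupp.notMem_support_iff.mp hi]
  -- explicit finset description of genInt for x > 0
  have hT : ∀ x : ℝ, 0 < x → genInt q x =
      ↑((hMfin x).toFinset.biUnion fun m =>
        (Finset.Icc 1 ⌊x * W q m⌋₊).map
          ⟨fun n => (n, m), fun n₁ n₂ h => congrArg Prod.fst h⟩) := by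
    intro x hx
    ext p
    simp only [Finset.coe_biUnion, Set.mem_iUnion, Finset.mem_coe, Finset.mem_map,
      Finset.mem_Icc, Set.Finite.mem_toFinset, Set.mem_setOf_eq, Function.Embedding.coeFn_mk,
      genInt]
    constructor
    · rintro ⟨h1, h2⟩
      have hp1 : (1 : ℝ) ≤ (p.1 : ℝ) := by exact_mod_cast h1
      have hPp : (p.2.prod fun i k => q i ^ k) ≤ x := by
        calc (p.2.prod fun i k => q i ^ k) = 1 * (p.2.prod fun i k => q i ^ k) := (one_mul _).symm
          _ ≤ (p.1 : ℝ) * (p.2.prod fun i k => q i ^ k) := by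
              exact mul_le_mul_of_nonneg_right hp1 (P_pos hq p.2).le
          _ ≤ x := h2
      refine ⟨p.2, hPp, p.1, ⟨h1, ?_⟩, rfl⟩
      apply Nat.le_floor
      rw [W_eq, ← div_eq_mul_inv, le_div_iff₀ (P_pos hq p.2)]
      exact h2
    · rintro ⟨m, hm, n, ⟨hn1, hn2⟩, rfl⟩
      refine ⟨hn1, ?_⟩
      have hfl : (n : ℝ) ≤ x * W q m := le_trans (Nat.cast_le.mpr hn2)
        (Nat.floor_le (mul_nonneg hx.le (W_pos hq m).le))
      rw [W_eq, ← div_eq_mul_inv] at hfl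
      show (n : ℝ) * (m.prod fun i k => q i ^ k) ≤ x
      rw [← le_div_iff₀ (P_pos hq m)]
      exact hfl
  -- the counting function as a finite sum
  have hcard : ∀ x : ℝ, 0 < x → (Nat.card (genInt q x) : ℝ) =
      ∑ m ∈ (hMfin x).toFinset, (⌊x * W q m⌋₊ : ℝ) := by
    intro x hx
    rw [hT x hx, Nat.card_coe_set_eq, Set.ncard_coe_finset]
    rw [Finset.card_biUnion]
    · push_cast
      apply Finset.sum_congr rfl
      intro m _
      rw [Finset.card_map, Nat.card_Icc]
      simp
    · intro m₁ _ m₂ _ hne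
      refine Finset.disjoint_left.mpr ?_
      rintro p hp1 hp2
      rw [Finset.mem_map] at hp1 hp2
      obtain ⟨n1, _, rfl⟩ := hp1
      obtain ⟨n2, _, h⟩ := hp2
      exact hne (congrArg Prod.snd h).symm
  -- tsum form of the normalized counting function
  have hsum_eq : ∀ x : ℝ, 1 ≤ x →
      (Nat.card (genInt q x) : ℝ) / x = ∑' m, (⌊x * W q m⌋₊ : ℝ) / x := by
    intro x hx
    have hx0 : (0 : ℝ) < x := lt_of_lt_of_le one_pos hx
    rw [tsum_eq_sum (s := (hMfin x).toFinset) ?_, hcard x hx0, Finset.sum_div]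
    intro m hm
    rw [Set.Finite.mem_toFinset, Set.mem_setOf_eq, not_le] at hm
    have : x * W q m < 1 := by
      rw [W_eq, ← div_eq_mul_inv, div_lt_one (P_pos hq m)]
      exact hm
    rw [Nat.floor_eq_zero.mpr this, Nat.cast_zero, zero_div]
  -- Tannery / dominated convergence
  have hTend : Tendsto (fun x : ℝ => ∑' m, (⌊x * W q m⌋₊ : ℝ) / x) atTop
      (nhds (∑' m, W q m)) := by
    apply tendsto_tsum_of_dominated_convergence hWsum
    · intro m
      apply tendsto_of_tendsto_of_tendsto_of_le_of_le'
        (g := fun x : ℝ => W q m - 1 / x) (h := fun _ : ℝ => W q m)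
      · have h1 : Tendsto (fun x : ℝ => 1 / x) atTop (nhds 0) := by
          simpa [one_div] using tendsto_inv_atTop_zero (𝕜 := ℝ)
        simpa using tendsto_const_nhds.sub h1
      · exact tendsto_const_nhds
      · filter_upwards [eventually_gt_atTop (0 : ℝ)] with x hx
        have h2 : x * W q m - 1 < (⌊x * W q m⌋₊ : ℝ) := Nat.sub_one_lt_floor _
        have he : W q m - 1 / x = (x * W q m - 1) / x := by field_simp
        rw [he, div_le_div_iff₀ hx hx]
        nlinarith
      · filter_upwards [eventually_gt_atTop (0 : ℝ)] with x hx
        rw [div_le_iff₀ hx]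
        have := Nat.floor_le (mul_nonneg hx.le (hWnn m))
        nlinarith
    · filter_upwards [eventually_gt_atTop (0 : ℝ)] with x hx m
      have h0 : (0 : ℝ) ≤ x * W q m := mul_nonneg hx.le (hWnn m)
      rw [Real.norm_eq_abs, abs_of_nonneg (div_nonneg (Nat.cast_nonneg _) hx.le),
        div_le_iff₀ hx]
      have := Nat.floor_le h0
      nlinarith
  refine ⟨?_, hC_pos, ?_⟩
  · intro x
    by_cases hx : 0 < x
    · rw [hT x hx]
      exact Finset.finite_toSet _
    · convert Set.finite_empty
      rw [Set.eq_empty_iff_forall_notMem]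
      rintro p ⟨h1, h2⟩
      have hp1 : (1 : ℝ) ≤ (p.1 : ℝ) := by exact_mod_cast h1
      push_neg at hx
      nlinarith [one_le_P hq p.2]
  · rw [← htsum_eq]
    apply hTend.congr'
    filter_upwards [eventually_ge_atTop (1 : ℝ)] with x hx
    exact (hsum_eq x hx).symm
end

section
/- Let (q_i)_{i∈ℕ} be a sequence of reals with q_i > 1 for all i, such that {i : q_i ≤ Y} is finite for every Y, and Σ_i 1/q_i = ∞. For x ≥ 1 let N(x) be the number of pairs (n, m) where n is a positive integer and m : ℕ → ℕ is finitely supported, such that n · ∏_i q_i^{m_i} ≤ x. Then N(x) is finite for every x and N(x)/x → ∞ as x → ∞. -/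
open Filter

section aux

variable {q : ℕ → ℝ}

lemma one_le_genProd (hq : ∀ i, 1 < q i) (m : ℕ →₀ ℕ) :
    1 ≤ m.prod fun i k => q i ^ k := by
  have := Finset.prod_le_prod (s := m.support) (f := fun _ => (1:ℝ))
    (g := fun i => q i ^ m i) (fun i _ => zero_le_one)
    (fun i _ => one_le_pow₀ (hq i).le)
  simpa [Finsupp.prod] using this

lemma pow_le_genProd (hq : ∀ i, 1 < q i) (m : ℕ →₀ ℕ) (j : ℕ) :
    q j ^ m j ≤ m.prod fun i k => q i ^ k := by
  by_cases hj : j ∈ m.support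
  · rw [Finsupp.prod, ← Finset.mul_prod_erase _ _ hj]
    refine le_mul_of_one_le_right (pow_nonneg (by linarith [hq j]) _) ?_
    have := Finset.prod_le_prod (s := m.support.erase j) (f := fun _ => (1:ℝ))
      (g := fun i => q i ^ m i) (fun i _ => zero_le_one)
      (fun i _ => one_le_pow₀ (hq i).le)
    simpa using this
  · rw [Finsupp.notMem_support_iff.mp hj, pow_zero]
    exact one_le_genProd hq m

lemma genInt_finite (hq : ∀ i, 1 < q i) (hloc : ∀ Y : ℝ, {i : ℕ | q i ≤ Y}.Finite) (x : ℝ) :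
    (genInt q x).Finite := by
  classical
  set F : Finset ℕ := (hloc x).toFinset with hF
  set g : ℕ →₀ ℕ := Finsupp.indicator F (fun j _ => ⌊x / (q j - 1)⌋₊) with hg
  have hsub : genInt q x ⊆ (Set.Icc 1 ⌊x⌋₊) ×ˢ (Set.Iic g) := by
    rintro ⟨n, m⟩ ⟨hn, hle⟩
    have hP : 1 ≤ m.prod fun i k => q i ^ k := one_le_genProd hq m
    have hn0 : (0:ℝ) ≤ (n:ℝ) := Nat.cast_nonneg n
    have hnx : (n : ℝ) ≤ x := le_trans (le_mul_of_one_le_right hn0 hP) hle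
    have hPx : (m.prod fun i k => q i ^ k) ≤ x := by
      calc (m.prod fun i k => q i ^ k) ≤ (n:ℝ) * (m.prod fun i k => q i ^ k) := by
            have : (1:ℝ) ≤ (n:ℝ) := by exact_mod_cast hn
            nlinarith
        _ ≤ x := hle
    constructor
    · exact ⟨hn, Nat.le_floor hnx⟩
    · rw [Set.mem_Iic, Finsupp.le_def]
      intro j
      by_cases hj : m j = 0
      · simp [hj]
      have hmj : 1 ≤ m j := Nat.one_le_iff_ne_zero.mpr hj
      have hpow : q j ^ m j ≤ x := le_trans (pow_le_genProd hq m j) hPx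
      have hq1 : (0:ℝ) < q j - 1 := by linarith [hq j]
      have hjF : j ∈ F := by
        rw [hF, Set.Finite.mem_toFinset]
        show q j ≤ x
        calc q j = q j ^ 1 := (pow_one _).symm
          _ ≤ q j ^ m j := pow_le_pow_right₀ (hq j).le hmj
          _ ≤ x := hpow
      have hber : 1 + (m j : ℝ) * (q j - 1) ≤ q j ^ m j := by
        have := one_add_mul_le_pow (a := q j - 1) (by linarith [hq j]) (m j)
        simpa using this
      have hfin : (m j : ℝ) ≤ x / (q j - 1) := by
        rw [le_div_iff₀ hq1]
        nlinarith
      have : m j ≤ ⌊x / (q j - 1)⌋₊ := Nat.le_floor hfin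
      rwa [hg, Finsupp.indicator_of_mem hjF]
  exact ((Set.finite_Icc 1 ⌊x⌋₊).prod (Set.finite_Iic g)).subset hsub

lemma sum_le_prod_one_add (s : Finset ℕ) (f : ℕ → ℝ) (hf : ∀ i, 0 ≤ f i) :
    1 + ∑ i ∈ s, f i ≤ ∏ i ∈ s, (1 + f i) := by
  classical
  induction s using Finset.cons_induction with
  | empty => simp
  | cons a s ha ih =>
    rw [Finset.sum_cons, Finset.prod_cons]
    have hs : 0 ≤ ∑ i ∈ s, f i := Finset.sum_nonneg fun i _ => hf i
    nlinarith [hf a, hf a]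

/-- Key lower bound for the counting function. -/
lemma genInt_lower (hq : ∀ i, 1 < q i) (hloc : ∀ Y : ℝ, {i : ℕ | q i ≤ Y}.Finite)
    (x : ℝ) (hx : 0 ≤ x) (n : ℕ) :
    x * (∏ i ∈ Finset.range n, (1 + 1 / q i)) - 2 ^ n
      ≤ (Nat.card (genInt q x) : ℝ) := by
  classical
  set P : Finset ℕ → ℝ := fun T => ∏ i ∈ T, q i with hP
  have hPpos : ∀ T : Finset ℕ, 0 < P T := fun T =>
    Finset.prod_pos fun i _ => lt_trans one_pos (hq i)
  set msupp : Finset ℕ → (ℕ →₀ ℕ) := fun T => Finsupp.indicator T (fun _ _ => 1)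
    with hmsupp
  have hmsupp_apply : ∀ T j, msupp T j = if j ∈ T then 1 else 0 := by
    intro T j
    by_cases hj : j ∈ T
    · simp [hmsupp, Finsupp.indicator_of_mem hj, hj]
    · simp [hmsupp, Finsupp.indicator_of_notMem hj, hj]
  have hmsupp_inj : ∀ T T' : Finset ℕ, msupp T = msupp T' → T = T' := by
    intro T T' h
    ext j
    have := DFunLike.congr_fun h j
    rw [hmsupp_apply, hmsupp_apply] at this
    by_cases h1 : j ∈ T <;> by_cases h2 : j ∈ T' <;> simp [h1, h2] at this ⊢
  have hprod : ∀ T : Finset ℕ, ((msupp T).prod fun i k => q i ^ k) = P T := by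
    intro T
    rw [Finsupp.prod_of_support_subset (msupp T)
      (Finset.coe_subset.mp (Finsupp.support_indicator_subset T _)) _
      (fun i _ => pow_zero _)]
    apply Finset.prod_congr rfl
    intro i hi
    rw [hmsupp_apply, if_pos hi, pow_one]
  set t : Finset (ℕ × (ℕ →₀ ℕ)) :=
    (Finset.range n).powerset.biUnion fun T =>
      (Finset.Icc 1 ⌊x / P T⌋₊).image fun k => (k, msupp T) with ht
  have htsub : (t : Set (ℕ × (ℕ →₀ ℕ))) ⊆ genInt q x := by
    intro p hp
    simp only [ht, Finset.coe_biUnion, Set.mem_iUnion, Finset.mem_coe,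
      Finset.mem_image, Finset.mem_Icc] at hp
    obtain ⟨T, _, k, ⟨hk1, hk2⟩, rfl⟩ := hp
    refine ⟨hk1, ?_⟩
    rw [hprod]
    have : (k : ℝ) ≤ x / P T := by
      calc (k : ℝ) ≤ (⌊x / P T⌋₊ : ℝ) := Nat.cast_le.mpr hk2
        _ ≤ x / P T := Nat.floor_le (div_nonneg hx (hPpos T).le)
    calc (k : ℝ) * P T ≤ (x / P T) * P T :=
          mul_le_mul_of_nonneg_right this (hPpos T).le
      _ = x := div_mul_cancel₀ x (hPpos T).ne'
  have hcard : t.card = ∑ T ∈ (Finset.range n).powerset, ⌊x / P T⌋₊ := by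
    rw [ht, Finset.card_biUnion]
    · apply Finset.sum_congr rfl
      intro T _
      rw [Finset.card_image_of_injective _ (fun a b h => (Prod.mk.injEq _ _ _ _).mp h |>.1),
        Nat.card_Icc]
      omega
    · intro T hT T' hT' hne
      rw [Function.onFun, Finset.disjoint_left]
      rintro p hp hp'
      simp only [Finset.mem_image] at hp hp'
      obtain ⟨k, _, rfl⟩ := hp
      obtain ⟨k', _, h⟩ := hp'
      exact hne (hmsupp_inj _ _ ((Prod.mk.injEq _ _ _ _).mp h).2.symm)
  have hle : (t.card : ℝ) ≤ (Nat.card (genInt q x) : ℝ) := by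
    rw [Nat.card_coe_set_eq]
    exact_mod_cast (Set.ncard_coe_finset t) ▸
      Set.ncard_le_ncard htsub (genInt_finite hq hloc x)
  refine le_trans ?_ hle
  rw [hcard]
  push_cast
  have hsum : ∑ T ∈ (Finset.range n).powerset, (x / P T - 1)
      ≤ ∑ T ∈ (Finset.range n).powerset, (⌊x / P T⌋₊ : ℝ) :=
    Finset.sum_le_sum fun T _ => (Nat.sub_one_lt_floor _).le
  refine le_trans ?_ hsum
  rw [Finset.sum_sub_distrib, Finset.sum_const, Finset.card_powerset,
    Finset.card_range, nsmul_eq_mul]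
  have key : ∑ T ∈ (Finset.range n).powerset, x / P T
      = x * ∏ i ∈ Finset.range n, (1 + 1 / q i) := by
    have h1 : ∏ i ∈ Finset.range n, (1 / q i + 1)
        = ∑ T ∈ (Finset.range n).powerset, ∏ i ∈ T, 1 / q i := by
      rw [Finset.prod_add]
      apply Finset.sum_congr rfl
      intro T hT
      simp
    have h2 : ∀ T : Finset ℕ, x / P T = x * ∏ i ∈ T, 1 / q i := by
      intro T
      rw [div_eq_mul_inv]
      congr 1
      rw [← Finset.prod_inv_distrib]
      exact Finset.prod_congr rfl fun i _ => (one_div (q i)).symm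
    have h3 : ∏ i ∈ Finset.range n, (1 + 1 / q i)
        = ∏ i ∈ Finset.range n, (1 / q i + 1) := by
      apply Finset.prod_congr rfl; intro i _; ring
    rw [h3, h1, Finset.mul_sum]
    exact Finset.sum_congr rfl fun T _ => h2 T
  push_cast
  linarith [key.le, key.ge]

end aux

/-- Adjoining to the usual primes a locally finite family of generators `q_i > 1` with
`Σ_i 1/q_i = ∞` yields generalized integers whose counting function `N(x)` is finite
for every `x` but satisfies `N(x)/x → ∞`. -/
theorem density_infinite_of_adjoined_generators (q : ℕ → ℝ) (hq : ∀ i, 1 < q i)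
    (hloc : ∀ Y : ℝ, {i : ℕ | q i ≤ Y}.Finite)
    (hdiv : ¬ Summable (fun i => 1 / q i)) :
    (∀ x : ℝ, (genInt q x).Finite) ∧
    Tendsto (fun x : ℝ => (Nat.card (genInt q x) : ℝ) / x) atTop atTop := by
  refine ⟨genInt_finite hq hloc, ?_⟩
  rw [tendsto_atTop]
  intro C
  have hpos : ∀ i, 0 ≤ 1 / q i := fun i => le_of_lt (div_pos one_pos (lt_trans one_pos (hq i)))
  have htend := (not_summable_iff_tendsto_nat_atTop_of_nonneg hpos).mp hdiv
  obtain ⟨n, hn⟩ := (tendsto_atTop.mp htend C).exists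
  have hS : C + 1 ≤ ∏ i ∈ Finset.range n, (1 + 1 / q i) := by
    have := sum_le_prod_one_add (Finset.range n) (fun i => 1 / q i) hpos
    linarith
  set S := ∏ i ∈ Finset.range n, (1 + 1 / q i) with hSdef
  filter_upwards [eventually_ge_atTop ((2:ℝ) ^ n), eventually_gt_atTop (0:ℝ)]
    with x hx2 hx0
  have hlow := genInt_lower hq hloc x hx0.le n
  rw [← hSdef] at hlow
  rw [le_div_iff₀ hx0]
  calc C * x ≤ x * S - 2 ^ n := by nlinarith
    _ ≤ (Nat.card (genInt q x) : ℝ) := hlow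
end

section
/- Let F be a finite set of (usual) prime numbers and let s_1, …, s_k be reals with s_j > 1 for each j. For x ≥ 1 let N(x) be the number of pairs (n, m) where n is a positive integer having no prime factor in F and m : {1,…,k} → ℕ, such that n · ∏_{j=1}^k s_j^{m_j} ≤ x. Then N(x)/x → ∏_{j=1}^k (1 − 1/s_j)^{−1} · ∏_{p∈F} (1 − 1/p) as x → ∞. -/
open Filter

open Set

noncomputable def Acnt (F : Finset ℕ) (x : ℝ) : ℕ :=
  {n : ℕ | 1 ≤ n ∧ (∀ q ∈ F, ¬ q ∣ n) ∧ (n : ℝ) ≤ x}.ncard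

lemma Aset_finite (F : Finset ℕ) (x : ℝ) :
    {n : ℕ | 1 ≤ n ∧ (∀ q ∈ F, ¬ q ∣ n) ∧ (n : ℝ) ≤ x}.Finite := by
  apply (Set.finite_Iic ⌊x⌋₊).subset
  rintro n ⟨-, -, h⟩
  exact Nat.le_floor h

lemma Acnt_empty : ∀ x : ℝ, (Acnt ∅ x : ℝ) = ⌊x⌋₊ := by
  intro x
  have : {n : ℕ | 1 ≤ n ∧ (∀ q ∈ (∅ : Finset ℕ), ¬ q ∣ n) ∧ (n : ℝ) ≤ x}
      = ↑(Finset.Icc 1 ⌊x⌋₊) := by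
    ext n
    constructor
    · rintro ⟨h1, -, h2⟩
      simp only [Finset.coe_Icc, Set.mem_Icc]
      exact ⟨h1, Nat.le_floor h2⟩
    · intro hn
      simp only [Finset.coe_Icc, Set.mem_Icc] at hn
      refine ⟨hn.1, fun q hq => absurd hq (Finset.notMem_empty q), ?_⟩
      calc (n : ℝ) ≤ ⌊x⌋₊ := by exact_mod_cast hn.2
        _ ≤ x := Nat.floor_le (by
          by_contra hx
          push_neg at hx
          rw [Nat.floor_eq_zero.2 (by linarith)] at hn
          omega)
  rw [Acnt, this, Set.ncard_coe_finset, Nat.card_Icc]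
  simp

lemma Acnt_step (F : Finset ℕ) (hF : ∀ p ∈ F, Nat.Prime p) (p : ℕ) (hp : Nat.Prime p)
    (hpF : p ∉ F) (x : ℝ) :
    (Acnt (insert p F) x : ℝ) = (Acnt F x : ℝ) - Acnt F (x / p) := by
  have hp0 : (0:ℝ) < p := by exact_mod_cast hp.pos
  set S : Set ℕ := {n : ℕ | 1 ≤ n ∧ (∀ q ∈ F, ¬ q ∣ n) ∧ (n : ℝ) ≤ x} with hS
  set S1 : Set ℕ := {n : ℕ | 1 ≤ n ∧ (∀ q ∈ insert p F, ¬ q ∣ n) ∧ (n : ℝ) ≤ x} with hS1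
  set T : Set ℕ := {n : ℕ | 1 ≤ n ∧ (∀ q ∈ F, ¬ q ∣ n) ∧ (n : ℝ) ≤ x / p} with hT
  have himg : (fun n => p * n) '' T = {n ∈ S | p ∣ n} := by
    ext n
    constructor
    · rintro ⟨m, ⟨hm1, hm2, hm3⟩, rfl⟩
      refine ⟨⟨Nat.one_le_iff_ne_zero.2 (Nat.mul_ne_zero hp.pos.ne' (by omega)), ?_, ?_⟩, ⟨m, rfl⟩⟩
      · intro q hq hdvd
        rcases (Nat.Prime.dvd_mul (hF q hq)).1 hdvd with h | h
        · exact hpF (((Nat.prime_dvd_prime_iff_eq (hF q hq) hp).1 h) ▸ hq)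
        · exact hm2 q hq h
      · push_cast
        calc (p:ℝ) * m ≤ p * (x / p) := by nlinarith
          _ = x := by field_simp
    · rintro ⟨⟨hn1, hn2, hn3⟩, m, rfl⟩
      refine ⟨m, ⟨Nat.one_le_iff_ne_zero.2 (by rintro rfl; simp at hn1), ?_, ?_⟩, rfl⟩
      · exact fun q hq hdvd => hn2 q hq (hdvd.mul_left p)
      · rw [le_div_iff₀ hp0]
        push_cast at hn3 ⊢
        linarith [hn3]
  have hsplit : S = S1 ∪ {n ∈ S | p ∣ n} := by
    ext n
    simp only [hS, hS1, Set.mem_setOf_eq, Set.mem_union, Set.mem_sep_iff,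
      Finset.mem_insert]
    constructor
    · rintro ⟨h1, h2, h3⟩
      by_cases hd : p ∣ n
      · exact Or.inr ⟨⟨h1, h2, h3⟩, hd⟩
      · exact Or.inl ⟨h1, fun q hq => hq.elim (fun h => h ▸ hd) (h2 q), h3⟩
    · rintro (⟨h1, h2, h3⟩ | ⟨h, -⟩)
      · exact ⟨h1, fun q hq => h2 q (Or.inr hq), h3⟩
      · exact h
  have hdisj : Disjoint S1 {n ∈ S | p ∣ n} := by
    rw [Set.disjoint_left]
    rintro n ⟨-, h2, -⟩ ⟨-, hd⟩
    exact h2 p (Finset.mem_insert_self p F) hd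
  have hcard : S.ncard = S1.ncard + {n ∈ S | p ∣ n}.ncard := by
    conv_lhs => rw [hsplit]
    exact Set.ncard_union_eq hdisj (Aset_finite _ _)
      ((Aset_finite F x).subset (Set.sep_subset _ _))
  have hcard2 : {n ∈ S | p ∣ n}.ncard = T.ncard := by
    rw [← himg, Set.ncard_image_of_injective _ (mul_right_injective₀ hp.pos.ne')]
  have : Acnt F x = Acnt (insert p F) x + Acnt F (x / p) := by
    rw [Acnt, Acnt, Acnt, ← hS, ← hS1, ← hT, hcard, hcard2]
  rw [this]
  push_cast
  ring

lemma Acnt_tendsto (F : Finset ℕ) (hF : ∀ p ∈ F, Nat.Prime p) :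
    Tendsto (fun x : ℝ => (Acnt F x : ℝ) / x) atTop
      (nhds (∏ p ∈ F, (1 - 1 / (p : ℝ)))) := by
  revert hF
  induction F using Finset.induction with
  | empty =>
    intro _
    simp only [Finset.prod_empty]
    have : ∀ x : ℝ, (Acnt ∅ x : ℝ) / x = (⌊x⌋₊ : ℝ) / x := fun x => by rw [Acnt_empty]
    simp only [this]
    exact tendsto_nat_floor_div_atTop
  | @insert p F hpF ih =>
    intro hFp
    have hp : Nat.Prime p := hFp p (Finset.mem_insert_self p F)
    have hF' : ∀ q ∈ F, Nat.Prime q := fun q hq => hFp q (Finset.mem_insert_of_mem hq)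
    have hp0 : (0:ℝ) < p := by exact_mod_cast hp.pos
    have key : ∀ x : ℝ, 0 < x → (Acnt (insert p F) x : ℝ) / x
        = (Acnt F x : ℝ) / x - ((Acnt F (x / p) : ℝ) / (x / p)) * (1 / p) := by
      intro x hx
      rw [Acnt_step F hF' p hp hpF x]
      field_simp
    have h1 : Tendsto (fun x : ℝ => (Acnt F x : ℝ) / x - ((Acnt F (x / p) : ℝ) / (x / p)) * (1 / p))
        atTop (nhds ((∏ q ∈ F, (1 - 1 / (q : ℝ))) - (∏ q ∈ F, (1 - 1 / (q : ℝ))) * (1 / p))) := by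
      apply Tendsto.sub (ih hF')
      exact ((ih hF').comp (tendsto_id.atTop_div_const hp0)).mul_const _
    have heq : (∏ q ∈ insert p F, (1 - 1 / (q : ℝ)))
        = (∏ q ∈ F, (1 - 1 / (q : ℝ))) - (∏ q ∈ F, (1 - 1 / (q : ℝ))) * (1 / p) := by
      rw [Finset.prod_insert hpF]
      ring
    rw [heq]
    apply h1.congr'
    filter_upwards [eventually_gt_atTop 0] with x hx
    exact (key x hx).symm


noncomputable def Ncnt (F : Finset ℕ) {k : ℕ} (s : Fin k → ℝ) (x : ℝ) : ℕ :=
  {p : ℕ × (Fin k → ℕ) | 1 ≤ p.1 ∧ (∀ q ∈ F, ¬ q ∣ p.1) ∧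
    (p.1 : ℝ) * ∏ j : Fin k, s j ^ p.2 j ≤ x}.ncard

lemma one_le_prod_pow' {k : ℕ} {s : Fin k → ℝ} (hs : ∀ j, 1 < s j) (m : Fin k → ℕ)
    (t : Finset (Fin k)) : (1:ℝ) ≤ ∏ j ∈ t, s j ^ m j := by
  calc (1:ℝ) = ∏ _j ∈ t, 1 := by simp
    _ ≤ ∏ j ∈ t, s j ^ m j :=
      Finset.prod_le_prod (by intros; norm_num) (fun j _ => one_le_pow₀ (hs j).le)

lemma one_le_prod_pow {k : ℕ} {s : Fin k → ℝ} (hs : ∀ j, 1 < s j) (m : Fin k → ℕ) :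
    (1:ℝ) ≤ ∏ j : Fin k, s j ^ m j := one_le_prod_pow' hs m Finset.univ

lemma Nset_finite (F : Finset ℕ) {k : ℕ} (s : Fin k → ℝ) (hs : ∀ j, 1 < s j) (x : ℝ) :
    {p : ℕ × (Fin k → ℕ) | 1 ≤ p.1 ∧ (∀ q ∈ F, ¬ q ∣ p.1) ∧
      (p.1 : ℝ) * ∏ j : Fin k, s j ^ p.2 j ≤ x}.Finite := by
  choose B hB using fun j => pow_unbounded_of_one_lt x (hs j)
  apply (Set.Finite.prod (Set.finite_Iic ⌊x⌋₊)
    (Set.Finite.pi (fun j : Fin k => Set.finite_Iic (B j)))).subset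
  rintro ⟨n, m⟩ ⟨h1, -, h3⟩
  have hn1 : (1:ℝ) ≤ n := by exact_mod_cast h1
  have hprod := one_le_prod_pow hs m
  constructor
  · refine Nat.le_floor ?_
    calc (n:ℝ) = n * 1 := (mul_one _).symm
      _ ≤ n * ∏ j, s j ^ m j := by nlinarith
      _ ≤ x := h3
  · intro j _
    simp only [Set.mem_Iic]
    by_contra hj
    push_neg at hj
    have h4 : s j ^ B j ≤ s j ^ m j := pow_le_pow_right₀ (hs j).le (le_of_lt hj)
    have h5 : s j ^ m j ≤ ∏ i, s i ^ m i := by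
      rw [← Finset.mul_prod_erase Finset.univ (fun i => s i ^ m i) (Finset.mem_univ j)]
      exact le_mul_of_one_le_right (pow_nonneg (by linarith [hs j]) _) (one_le_prod_pow' hs m _)
    have h6 : ∏ i, s i ^ m i ≤ n * ∏ i, s i ^ m i :=
      le_mul_of_one_le_left (by positivity) hn1
    simp only at h3
    linarith [hB j]

lemma Ncnt_eq_zero (F : Finset ℕ) {k : ℕ} (s : Fin k → ℝ) (hs : ∀ j, 1 < s j)
    {x : ℝ} (hx : x < 1) : Ncnt F s x = 0 := by
  rw [Ncnt, Set.ncard_eq_zero (Nset_finite F s hs x)]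
  ext ⟨n, m⟩
  simp only [Set.mem_setOf_eq, Set.mem_empty_iff_false, iff_false]
  rintro ⟨h1, -, h3⟩
  have hn1 : (1:ℝ) ≤ n := by exact_mod_cast h1
  have := one_le_prod_pow hs m
  nlinarith

lemma Ncnt_mono (F : Finset ℕ) {k : ℕ} (s : Fin k → ℝ) (hs : ∀ j, 1 < s j) :
    Monotone (fun x => Ncnt F s x) := by
  intro x y hxy
  apply Set.ncard_le_ncard _ (Nset_finite F s hs y)
  rintro ⟨n, m⟩ ⟨h1, h2, h3⟩
  exact ⟨h1, h2, h3.trans hxy⟩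

lemma Ncnt_zero (F : Finset ℕ) (s : Fin 0 → ℝ) (x : ℝ) :
    Ncnt F s x = Acnt F x := by
  rw [Ncnt, Acnt]
  have : {p : ℕ × (Fin 0 → ℕ) | 1 ≤ p.1 ∧ (∀ q ∈ F, ¬ q ∣ p.1) ∧
      (p.1 : ℝ) * ∏ j : Fin 0, s j ^ p.2 j ≤ x}
      = (fun n => (n, (fun j => 0 : Fin 0 → ℕ))) ''
        {n : ℕ | 1 ≤ n ∧ (∀ q ∈ F, ¬ q ∣ n) ∧ (n : ℝ) ≤ x} := by
    ext ⟨n, m⟩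
    simp only [Set.mem_setOf_eq, Set.mem_image, Finset.univ_eq_empty, Finset.prod_empty,
      mul_one]
    constructor
    · rintro ⟨h1, h2, h3⟩
      exact ⟨n, ⟨h1, h2, h3⟩, by rw [Prod.mk.injEq]; exact ⟨rfl, Subsingleton.elim _ _⟩⟩
    · rintro ⟨n', hn', heq⟩
      rw [Prod.mk.injEq] at heq
      obtain ⟨rfl, -⟩ := heq
      exact hn'
  rw [this, Set.ncard_image_of_injective]
  intro a b hab
  simpa using congrArg Prod.fst hab

lemma Ncnt_succ (F : Finset ℕ) {k : ℕ} (s : Fin (k + 1) → ℝ) (hs : ∀ j, 1 < s j) (x : ℝ) :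
    (Ncnt F s x : ℝ) = ∑' m : ℕ,
      (Ncnt F (fun j : Fin k => s j.castSucc) (x / s (Fin.last k) ^ m) : ℝ) := by
  set sL := s (Fin.last k) with hsL
  have hsL1 : 1 < sL := hs _
  have hsL0 : 0 < sL := by linarith
  set s' : Fin k → ℝ := fun j => s j.castSucc with hs'def
  have hs' : ∀ j, 1 < s' j := fun j => hs _
  set S := {p : ℕ × (Fin (k+1) → ℕ) | 1 ≤ p.1 ∧ (∀ q ∈ F, ¬ q ∣ p.1) ∧
    (p.1 : ℝ) * ∏ j : Fin (k+1), s j ^ p.2 j ≤ x} with hSdef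
  set I : ℕ → Set (ℕ × (Fin k → ℕ)) := fun m =>
    {p : ℕ × (Fin k → ℕ) | 1 ≤ p.1 ∧ (∀ q ∈ F, ¬ q ∣ p.1) ∧
      (p.1 : ℝ) * ∏ j : Fin k, s' j ^ p.2 j ≤ x / sL ^ m} with hIdef
  -- membership characterization
  have hchar : ∀ (n : ℕ) (ν : Fin (k+1) → ℕ),
      (n, ν) ∈ S ↔ (n, Fin.init ν) ∈ I (ν (Fin.last k)) := by
    intro n ν
    have hprod : ∏ j : Fin (k+1), s j ^ ν j
        = (∏ j : Fin k, s' j ^ (Fin.init ν) j) * sL ^ ν (Fin.last k) := by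
      rw [Fin.prod_univ_castSucc]
      rfl
    simp only [hSdef, hIdef, Set.mem_setOf_eq, hprod]
    rw [← mul_assoc, le_div_iff₀ (by positivity)]
  -- slices
  set Sl : ℕ → Set (ℕ × (Fin (k+1) → ℕ)) := fun m => {p ∈ S | p.2 (Fin.last k) = m}
    with hSl
  have hslice : ∀ m : ℕ, (Sl m).ncard = (I m).ncard := by
    intro m
    have himg : Sl m = (fun q : ℕ × (Fin k → ℕ) => (q.1, Fin.snoc q.2 m)) '' I m := by
      ext ⟨n, ν⟩
      constructor
      · rintro ⟨hmem, hlast⟩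
        refine ⟨(n, Fin.init ν), ?_, ?_⟩
        · rw [← hlast]; exact (hchar n ν).1 hmem
        · simp [Fin.snoc_init_self, ← hlast]
      · rintro ⟨⟨n', μ⟩, hmem, heq⟩
        rw [Prod.mk.injEq] at heq
        obtain ⟨rfl, rfl⟩ := heq
        constructor
        · rw [hchar]
          simpa [Fin.init_snoc, Fin.snoc_last] using hmem
        · simp [Fin.snoc_last]
    rw [himg, Set.ncard_image_of_injective]
    rintro ⟨a, μ⟩ ⟨b, μ'⟩ hab
    rw [Prod.mk.injEq] at hab
    obtain ⟨rfl, h2⟩ := hab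
    have := congrArg Fin.init h2
    rw [Fin.init_snoc, Fin.init_snoc] at this
    simp only at this
    rw [Prod.mk.injEq]
    exact ⟨rfl, this⟩
  -- partial unions
  have hT : ∀ M : ℕ, {p ∈ S | p.2 (Fin.last k) < M}.ncard
      = ∑ m ∈ Finset.range M, (I m).ncard := by
    intro M
    induction M with
    | zero => simp
    | succ M ih =>
      have hsplitT : {p ∈ S | p.2 (Fin.last k) < M + 1}
          = {p ∈ S | p.2 (Fin.last k) < M} ∪ Sl M := by
        ext p
        simp only [Set.mem_setOf_eq, Set.mem_union, hSl]
        constructor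
        · rintro ⟨h1, h2⟩
          rcases Nat.lt_succ_iff_lt_or_eq.1 h2 with h | h
          · exact Or.inl ⟨h1, h⟩
          · exact Or.inr ⟨h1, h⟩
        · rintro (⟨h1, h2⟩ | ⟨h1, h2⟩)
          · exact ⟨h1, h2.trans (Nat.lt_succ_self M)⟩
          · exact ⟨h1, h2 ▸ Nat.lt_succ_self M⟩
      have hdisj : Disjoint {p ∈ S | p.2 (Fin.last k) < M} (Sl M) := by
        rw [Set.disjoint_left]
        rintro p ⟨-, h1⟩ ⟨-, h2⟩
        omega
      rw [hsplitT, Set.ncard_union_eq hdisj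
        ((Nset_finite F s hs x).subset (Set.sep_subset _ _))
        ((Nset_finite F s hs x).subset (Set.sep_subset _ _)),
        ih, hslice M, Finset.sum_range_succ]
  -- choose M
  obtain ⟨M, hM⟩ := pow_unbounded_of_one_lt x hsL1
  have hSeq : S = {p ∈ S | p.2 (Fin.last k) < M} := by
    ext ⟨n, ν⟩
    simp only [Set.mem_setOf_eq, iff_self_and]
    intro hmem
    obtain ⟨h1, -, h3⟩ := hmem
    have hn1 : (1:ℝ) ≤ n := by exact_mod_cast h1
    have hP := one_le_prod_pow hs' (Fin.init ν)
    have hprod : ∏ j : Fin (k+1), s j ^ ν j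
        = (∏ j : Fin k, s' j ^ (Fin.init ν) j) * sL ^ ν (Fin.last k) := by
      rw [Fin.prod_univ_castSucc]; rfl
    rw [← pow_lt_pow_iff_right₀ hsL1]
    calc sL ^ ν (Fin.last k) ≤ (n : ℝ) * ∏ j : Fin (k+1), s j ^ ν j := by
          rw [hprod, ← mul_assoc]
          have h4 : (1:ℝ) ≤ (n:ℝ) * ∏ j : Fin k, s' j ^ (Fin.init ν) j := by nlinarith
          exact le_mul_of_one_le_left (pow_pos hsL0 _).le h4
      _ ≤ x := h3
      _ < sL ^ M := hM
  have hzero : ∀ m : ℕ, M ≤ m → (Ncnt F s' (x / sL ^ m) : ℝ) = 0 := by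
    intro m hm
    rw [Ncnt_eq_zero F s' hs']
    · norm_num
    · rw [div_lt_one (by positivity)]
      calc x < sL ^ M := hM
        _ ≤ sL ^ m := pow_le_pow_right₀ hsL1.le hm
  rw [tsum_eq_sum (s := Finset.range M) (fun m hm => hzero m (by simpa using hm))]
  have : (Ncnt F s x : ℝ) = ((∑ m ∈ Finset.range M, (I m).ncard : ℕ) : ℝ) := by
    rw [Ncnt, ← hSdef]
    congr 1
    rw [← hT M, ← hSeq]
  rw [this]
  push_cast
  apply Finset.sum_congr rfl
  intro m _
  rfl

lemma linear_bound {g : ℝ → ℕ} {c : ℝ} (hmono : Monotone g) (h0 : ∀ y < (1:ℝ), g y = 0)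
    (hT : Tendsto (fun y => (g y : ℝ) / y) atTop (nhds c)) :
    ∃ C : ℝ, 0 < C ∧ ∀ y ≥ (0:ℝ), (g y : ℝ) ≤ C * y := by
  have hev : ∀ᶠ y in atTop, (g y : ℝ) / y ≤ c + 1 :=
    hT.eventually (eventually_le_nhds (lt_add_one c))
  obtain ⟨T, hT2⟩ := hev.exists_forall_of_atTop
  set T' := max T 1 with hT'
  refine ⟨max (c + 1) (g T' : ℝ) + 1, by positivity, ?_⟩
  intro y hy
  rcases lt_or_ge y 1 with h | h
  · rw [h0 y h]
    push_cast
    positivity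
  rcases lt_or_ge y T' with h2 | h2
  · have hg : (g y : ℝ) ≤ (g T' : ℝ) := by exact_mod_cast hmono h2.le
    calc (g y : ℝ) ≤ (g T' : ℝ) := hg
      _ ≤ max (c + 1) (g T' : ℝ) + 1 := by
          have := le_max_right (c + 1) ((g T' : ℝ)); linarith
      _ = (max (c + 1) (g T' : ℝ) + 1) * 1 := (mul_one _).symm
      _ ≤ (max (c + 1) (g T' : ℝ) + 1) * y := by
          apply mul_le_mul_of_nonneg_left h
          positivity
  · have hy2 : (g y : ℝ) / y ≤ c + 1 := hT2 y ((le_max_left T 1).trans h2)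
    have hy0 : (0:ℝ) < y := lt_of_lt_of_le one_pos h
    have h3 : (g y : ℝ) ≤ (c + 1) * y := by
      rw [div_le_iff₀ hy0] at hy2; exact hy2
    calc (g y : ℝ) ≤ (c + 1) * y := h3
      _ ≤ (max (c + 1) (g T' : ℝ) + 1) * y := by
          apply mul_le_mul_of_nonneg_right _ hy0.le
          have := le_max_left (c + 1) ((g T' : ℝ)); linarith

lemma Ncnt_tendsto (F : Finset ℕ) (hF : ∀ p ∈ F, Nat.Prime p) :
    ∀ (k : ℕ) (s : Fin k → ℝ), (∀ j, 1 < s j) →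
      Tendsto (fun x : ℝ => (Ncnt F s x : ℝ) / x) atTop
        (nhds ((∏ j, (1 - 1 / s j)⁻¹) * ∏ p ∈ F, (1 - 1 / (p : ℝ)))) := by
  intro k
  induction k with
  | zero =>
    intro s _
    simp only [Ncnt_zero, Finset.univ_eq_empty, Finset.prod_empty, one_mul]
    exact Acnt_tendsto F hF
  | succ k ih =>
    intro s hs
    set sL := s (Fin.last k) with hsLdef
    have hsL1 : 1 < sL := hs _
    have hsL0 : 0 < sL := by linarith
    set s' : Fin k → ℝ := fun j => s j.castSucc with hs'def
    have hs' : ∀ j, 1 < s' j := fun j => hs _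
    set c := (∏ j : Fin k, (1 - 1 / s' j)⁻¹) * ∏ p ∈ F, (1 - 1 / (p : ℝ)) with hc
    have ihs := ih s' hs'
    rw [← hc] at ihs
    obtain ⟨C, hC0, hC⟩ := linear_bound (Ncnt_mono F s' hs')
      (fun y hy => Ncnt_eq_zero F s' hs' hy) ihs
    have hinv0 : (0:ℝ) ≤ sL⁻¹ := by positivity
    have hinv1 : sL⁻¹ < 1 := inv_lt_one_of_one_lt₀ hsL1
    -- the limit value
    have hLval : (∏ j : Fin (k+1), (1 - 1 / s j)⁻¹) * ∏ p ∈ F, (1 - 1 / (p : ℝ))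
        = ∑' m : ℕ, c * sL⁻¹ ^ m := by
      rw [tsum_mul_left, tsum_geometric_of_lt_one hinv0 hinv1, Fin.prod_univ_castSucc]
      rw [hc, ← hsLdef]
      have : (1 - 1 / sL)⁻¹ = (1 - sL⁻¹)⁻¹ := by rw [one_div]
      rw [this]
      ring
    rw [hLval]
    have key : Tendsto (fun x : ℝ => ∑' m : ℕ,
        ((Ncnt F s' (x / sL ^ m) : ℝ) / x)) atTop (nhds (∑' m : ℕ, c * sL⁻¹ ^ m)) := by
      apply tendsto_tsum_of_dominated_convergence
        (bound := fun m => C * sL⁻¹ ^ m)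
        ((summable_geometric_of_lt_one hinv0 hinv1).mul_left C)
      · intro m
        have hq0 : (0:ℝ) < sL ^ m := pow_pos hsL0 m
        have h1 : Tendsto (fun x : ℝ =>
            ((Ncnt F s' (x / sL ^ m) : ℝ) / (x / sL ^ m)) * sL⁻¹ ^ m) atTop
            (nhds (c * sL⁻¹ ^ m)) :=
          (ihs.comp (tendsto_id.atTop_div_const hq0)).mul_const _
        apply h1.congr'
        filter_upwards [eventually_gt_atTop 0] with x hx
        field_simp
        ring_nf
        rw [← mul_pow, mul_inv_cancel₀ hsL0.ne', one_pow, one_mul]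
      · filter_upwards [eventually_gt_atTop 0] with x hx
        intro m
        have hq0 : (0:ℝ) < sL ^ m := pow_pos hsL0 m
        have hb := hC (x / sL ^ m) (by positivity)
        rw [Real.norm_eq_abs, abs_of_nonneg (by positivity)]
        rw [div_le_iff₀ hx]
        calc (Ncnt F s' (x / sL ^ m) : ℝ) ≤ C * (x / sL ^ m) := hb
          _ = C * sL⁻¹ ^ m * x := by
              rw [div_eq_mul_inv, ← inv_pow]; ring

    apply key.congr'
    filter_upwards [] with x
    rw [Ncnt_succ F s hs x, ← hsLdef, ← hs'def, tsum_div_const]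


/-- Deleting a finite set `F` of usual primes and adjoining finitely many generators
`s_1, …, s_k > 1` yields generalized integers with density
`∏_j (1 - 1/s_j)⁻¹ · ∏_{p∈F} (1 - 1/p)`. Here `N(x)` counts pairs `(n, m)` with
`n ≥ 1` having no prime factor in `F`, `m : Fin k → ℕ`, and `n · ∏_j s_j^{m_j} ≤ x`. -/
theorem density_of_finite_modification (F : Finset ℕ) (hF : ∀ p ∈ F, Nat.Prime p)
    (k : ℕ) (s : Fin k → ℝ) (hs : ∀ j, 1 < s j) :
    Tendsto (fun x : ℝ =>
        (Nat.card {p : ℕ × (Fin k → ℕ) |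
            1 ≤ p.1 ∧ (∀ q ∈ F, ¬ q ∣ p.1) ∧
            (p.1 : ℝ) * ∏ j : Fin k, s j ^ p.2 j ≤ x} : ℝ) / x)
      atTop
      (nhds ((∏ j : Fin k, (1 - 1 / s j)⁻¹) * ∏ p ∈ F, (1 - 1 / (p : ℝ)))) := by
  exact (Ncnt_tendsto F hF k s hs).congr
    (fun x => by simp only [Ncnt, Nat.card_coe_set_eq])
end

section
/- Let g ∈ L¹(ℝ) and ε > 0. Then there exists h ∈ L¹(ℝ) such that for every t ∈ ℝ, (1 + i t) · ( ∫_ℝ e^{−i u t} g(u) du ) · e^{−ε² t²/2} = ∫_ℝ e^{−i u t} h(u) du. -/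
open MeasureTheory Complex Real FourierTransform

private lemma wag_norm_exp (t u : ℝ) : ‖Complex.exp (-(Complex.I * u * t))‖ = 1 := by
  rw [show -(Complex.I * (u:ℂ) * (t:ℂ)) = ((-(u*t) : ℝ) : ℂ) * Complex.I by push_cast; ring]
  exact Complex.norm_exp_ofReal_mul_I _

/-- scaling relation with mathlib's Fourier transform -/
private lemma wag_F_eq (f : ℝ → ℂ) (t : ℝ) :
    (∫ u : ℝ, Complex.exp (-(Complex.I * u * t)) * f u) = 𝓕 f (t / (2 * π)) := by
  rw [Real.fourier_real_eq_integral_exp_smul]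
  congr 1 with u
  rw [smul_eq_mul]
  congr 2
  have h : (-2) * π * u * (t / (2 * π)) = -(u * t) := by
    field_simp
  rw [h]
  push_cast
  ring

private lemma wag_mul_integrable (f : ℝ → ℂ) (hf : Integrable f) (t : ℝ) :
    Integrable (fun u : ℝ => Complex.exp (-(Complex.I * u * t)) * f u) := by
  refine hf.bdd_mul (c := 1) ?_ (Filter.Eventually.of_forall fun u => le_of_eq (wag_norm_exp t u))
  exact (Complex.continuous_exp.comp (by continuity)).aestronglyMeasurable

/-- Fourier integral of a convolution is the product of Fourier integrals. -/
private lemma wag_conv (f m : ℝ → ℂ) (hf : Integrable f) (hm : Integrable m) (t : ℝ) :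
    (∫ u : ℝ, Complex.exp (-(Complex.I * u * t)) * ∫ v : ℝ, f v * m (u - v)) =
      (∫ v : ℝ, Complex.exp (-(Complex.I * v * t)) * f v) *
        (∫ w : ℝ, Complex.exp (-(Complex.I * w * t)) * m w) := by
  have hprod : Integrable (fun p : ℝ × ℝ => f p.2 * m (p.1 - p.2))
      ((volume : Measure ℝ).prod volume) :=
    hf.convolution_integrand (ContinuousLinearMap.mul ℝ ℂ) hm
  have hprod2 : Integrable (fun p : ℝ × ℝ =>
      Complex.exp (-(Complex.I * p.1 * t)) * (f p.2 * m (p.1 - p.2)))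
      ((volume : Measure ℝ).prod volume) := by
    refine hprod.bdd_mul (c := 1) ?_ (Filter.Eventually.of_forall fun p => le_of_eq (wag_norm_exp t p.1))
    exact (Complex.continuous_exp.comp (by continuity)).aestronglyMeasurable
  have step1 : (∫ u : ℝ, Complex.exp (-(Complex.I * u * t)) * ∫ v : ℝ, f v * m (u - v)) =
      ∫ u : ℝ, ∫ v : ℝ, Complex.exp (-(Complex.I * u * t)) * (f v * m (u - v)) := by
    congr 1 with u
    exact (integral_const_mul _ _).symm
  rw [step1, integral_integral_swap hprod2]
  have step2 : ∀ v : ℝ, (∫ u : ℝ, Complex.exp (-(Complex.I * u * t)) * (f v * m (u - v))) =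
      (Complex.exp (-(Complex.I * v * t)) * f v) *
        ∫ w : ℝ, Complex.exp (-(Complex.I * w * t)) * m w := by
    intro v
    have key : ∀ u : ℝ, Complex.exp (-(Complex.I * u * t)) * (f v * m (u - v)) =
        (Complex.exp (-(Complex.I * v * t)) * f v) *
          (Complex.exp (-(Complex.I * ((u - v : ℝ) : ℂ) * t)) * m (u - v)) := by
      intro u
      have h1 : Complex.exp (-(Complex.I * v * t)) *
          Complex.exp (-(Complex.I * ((u - v : ℝ) : ℂ) * t)) =
          Complex.exp (-(Complex.I * u * t)) := by
        rw [← Complex.exp_add]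
        congr 1
        push_cast
        ring
      rw [← h1]
      ring
    simp_rw [key, integral_const_mul]
    congr 1
    exact integral_sub_right_eq_self (fun w : ℝ => Complex.exp (-(Complex.I * w * t)) * m w) v
  simp_rw [step2]
  exact integral_mul_const _ _

/-- Multiplication by `(1 + it)·e^{-ε²t²/2}` preserves membership in the Wiener
algebra `ℱL¹(ℝ)`: for `g ∈ L¹(ℝ)` and `ε > 0` there is `h ∈ L¹(ℝ)` with
`(1 + it)·ĝ(t)·e^{-ε²t²/2} = ĥ(t)` for every `t`. -/
theorem wiener_algebra_gaussian_multiplier (g : ℝ → ℂ) (hg : Integrable g)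
    (ε : ℝ) (hε : 0 < ε) :
    ∃ h : ℝ → ℂ, Integrable h ∧ ∀ t : ℝ,
      (1 + Complex.I * t) * (∫ u : ℝ, Complex.exp (-(Complex.I * u * t)) * g u) *
          (Real.exp (-(ε ^ 2 * t ^ 2) / 2) : ℝ) =
        ∫ u : ℝ, Complex.exp (-(Complex.I * u * t)) * h u := by
  have hε2 : (0:ℝ) < ε ^ 2 := by positivity
  set b : ℝ := 1 / (2 * ε ^ 2) with hbdef
  have hb0 : 0 < b := by positivity
  have hbre : 0 < ((b : ℂ)).re := by simpa using hb0
  set γ : ℝ → ℂ := fun u : ℝ => Complex.exp (-(b:ℂ) * (u:ℂ) ^ 2) with hγdef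
  have hγint : Integrable γ := by
    rw [hγdef]
    have := integrable_cexp_quadratic hbre 0 0
    simpa [neg_mul] using this
  -- derivative of the gaussian
  have hd : ∀ u : ℝ, HasDerivAt γ ((-2 * (b:ℂ) * u) * γ u) u := by
    intro u
    have hz : HasDerivAt (fun z : ℂ => Complex.exp (-(b:ℂ) * z ^ 2))
        ((-2 * (b:ℂ) * u) * Complex.exp (-(b:ℂ) * (u:ℂ) ^ 2)) (u:ℂ) := by
      have h1 : HasDerivAt (fun z : ℂ => -(b:ℂ) * z ^ 2) (-2 * (b:ℂ) * u) (u:ℂ) := by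
        have := (hasDerivAt_pow 2 ((u:ℂ))).const_mul (-(b:ℂ))
        refine this.congr_deriv ?_
        push_cast
        ring
      have := h1.cexp
      refine this.congr_deriv ?_
      ring
    simpa [hγdef] using hz.comp_ofReal
  have hγdiff : Differentiable ℝ γ := fun u => (hd u).differentiableAt
  have hderiv : deriv γ = fun u : ℝ => (-2 * (b:ℂ) * u) * γ u := funext fun u => (hd u).deriv
  have hdγint : Integrable (deriv γ) := by
    rw [hderiv]
    refine ((integrable_mul_cexp_neg_mul_sq hbre).const_mul (-2 * (b:ℂ))).congr ?_
    filter_upwards with u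
    simp only [hγdef]
    ring
  -- the normalizing constant
  set K : ℂ := ((π : ℂ) / (b : ℂ)) ^ (1/2 : ℂ) with hKdef
  have hπb : ((π : ℂ) / (b : ℂ)) ≠ 0 := by
    apply div_ne_zero
    · exact_mod_cast Real.pi_ne_zero
    · exact_mod_cast hb0.ne'
  have hK : K ≠ 0 := by
    rw [hKdef, Ne, Complex.cpow_eq_zero_iff]
    tauto
  -- Fourier transform of γ
  have hFγ : ∀ t : ℝ, (∫ u : ℝ, Complex.exp (-(Complex.I * u * t)) * γ u) =
      K * Complex.exp (-((ε:ℂ) ^ 2 * (t:ℂ) ^ 2) / 2) := by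
    intro t
    have := fourierIntegral_gaussian hbre (-(t:ℂ))
    have heq : (∫ u : ℝ, Complex.exp (-(Complex.I * u * t)) * γ u) =
        ∫ x : ℝ, Complex.exp (Complex.I * (-(t:ℂ)) * x) * Complex.exp (-(b:ℂ) * (x:ℂ) ^ 2) := by
      congr 1 with u
      simp only [hγdef]
      congr 2
      ring
    rw [heq, this, hKdef]
    congr 2
    rw [hbdef]
    push_cast
    field_simp
    ring
  -- Fourier transform of deriv γ
  have hFd : ∀ t : ℝ, (∫ u : ℝ, Complex.exp (-(Complex.I * u * t)) * deriv γ u) =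
      (Complex.I * t) * ∫ u : ℝ, Complex.exp (-(Complex.I * u * t)) * γ u := by
    intro t
    rw [wag_F_eq, wag_F_eq, Real.fourier_deriv hγint hγdiff hdγint]
    simp only [smul_eq_mul]
    congr 1
    push_cast
    have hπ : ((π:ℝ):ℂ) ≠ 0 := Complex.ofReal_ne_zero.mpr Real.pi_ne_zero
    field_simp
  -- the multiplier function and the convolution
  set m : ℝ → ℂ := fun u => K⁻¹ * (γ u + deriv γ u) with hmdef
  have hmint : Integrable m := (hγint.add hdγint).const_mul _
  have hFm : ∀ t : ℝ, (∫ u : ℝ, Complex.exp (-(Complex.I * u * t)) * m u) =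
      (1 + Complex.I * t) * Complex.exp (-((ε:ℂ) ^ 2 * (t:ℂ) ^ 2) / 2) := by
    intro t
    have hsplit : (∫ u : ℝ, Complex.exp (-(Complex.I * u * t)) * m u) =
        K⁻¹ * ((∫ u : ℝ, Complex.exp (-(Complex.I * u * t)) * γ u) +
          ∫ u : ℝ, Complex.exp (-(Complex.I * u * t)) * deriv γ u) := by
      rw [← integral_add (wag_mul_integrable γ hγint t) (wag_mul_integrable _ hdγint t),
        ← integral_const_mul]
      congr 1 with u
      simp only [hmdef]
      ring
    rw [hsplit, hFd, hFγ]
    field_simp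
  refine ⟨fun u => ∫ v : ℝ, g v * m (u - v), ?_, ?_⟩
  · have := hg.integrable_convolution (ContinuousLinearMap.mul ℝ ℂ) hmint
    exact this
  · intro t
    rw [wag_conv g m hg hmint t, hFm]
    rw [show ((Real.exp (-(ε ^ 2 * t ^ 2) / 2) : ℝ) : ℂ) =
        Complex.exp (-((ε:ℂ) ^ 2 * (t:ℂ) ^ 2) / 2) by
      rw [Complex.ofReal_exp]; congr 1; push_cast; ring]
    ring
end
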